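/- arXiv:2303.11609 — 2 statements merged into one kernel-verified Lean document; each statement's English description precedes it below -/
import Mathlib

section
/- Let s>0, epsilon>0, theta_0>0, gamma>0, let phi^n be a cell-centered grid function on Omega=(0,L)^3 with ||phi^n||_inf < 1, and let (phi^{n+1}, mu^{n+1}, p^{n+1}, u^{n+1}) be a solution of the numerical scheme. Define the discrete energy F_h(phi) = h^3 * sum_{i,j,k=1}^{N} [ (1+phi_{i,j,k})*ln(1+phi_{i,j,k}) + (1-phi_{i,j,k})*ln(1-phi_{i,j,k}) - (theta_0/2)*phi_{i,j,k}^2 ] + (epsilon^2/2)*||grad_h phi||_2^2. Then F_h(phi^{n+1}) - F_h(phi^n) <= -(epsilon^2/2)*||grad_h(phi^{n+1}-phi^n)||_2^2 - s*||grad_h mu^{n+1}||_2^2 - (s/gamma)*( ||u^{n+1}||_2^2 + (-Delta_h u^{n+1}, u^{n+1}) ), where (-Delta_h u^{n+1}, u^{n+1}) is the MAC inner product (and is nonnegative under the stated boundary conditions, equaling the discrete energy norm ||grad_h u^{n+1}||_2^2). -/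
open Finset

noncomputable section

/-! Finite–difference / MAC-grid framework on Ω = (0,L)³ with N cells per
direction and mesh size h = L/N.  A cell-centered grid function is a map
`ℤ → ℤ → ℤ → ℝ` whose meaningful values are at indices in {1,…,N}³; ghost
values are given by the discrete homogeneous Neumann (reflection) condition,
implemented by clamping indices to {1,…,N}.  The x-component of a MAC vector
field is recorded so that `ux i j k` is the value at the x-face (i+1/2,j,k),
0 ≤ i ≤ N, 1 ≤ j,k ≤ N (analogously for the y,z components), and the
free-slip condition prescribes the tangential ghost values by reflection,
again implemented by clamping the tangential indices. -/

/-- Index clamped into `{1,…,N}`: implements the reflection ghost values. -/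
def clampIdx (N : ℕ) (i : ℤ) : ℤ := max 1 (min i (N : ℤ))

/-- Extension of a cell-centered grid function by the discrete homogeneous
Neumann (reflection) ghost values. -/
def nExt (N : ℕ) (φ : ℤ → ℤ → ℤ → ℝ) (i j k : ℤ) : ℝ :=
  φ (clampIdx N i) (clampIdx N j) (clampIdx N k)

/-- The cell indices `{1,…,N}`. -/
def cellIdx (N : ℕ) : Finset ℤ := Finset.Icc 1 (N : ℤ)

/-- The interior-face indices `{1,…,N-1}`. -/
def faceIdx (N : ℕ) : Finset ℤ := Finset.Icc 1 ((N : ℤ) - 1)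

/-- Cell-centered discrete inner product `(φ,ψ) = h³ Σ φψ`. -/
def cip (N : ℕ) (h : ℝ) (φ ψ : ℤ → ℤ → ℤ → ℝ) : ℝ :=
  h ^ 3 * ∑ i ∈ cellIdx N, ∑ j ∈ cellIdx N, ∑ k ∈ cellIdx N, φ i j k * ψ i j k

/-- Zero discrete mean: `Σ_{i,j,k=1}^N φ_{ijk} = 0`. -/
def zeroMean (N : ℕ) (φ : ℤ → ℤ → ℤ → ℝ) : Prop :=
  ∑ i ∈ cellIdx N, ∑ j ∈ cellIdx N, ∑ k ∈ cellIdx N, φ i j k = 0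

/-- Two cell-centered functions agree on all cells. -/
def CellEqOn (N : ℕ) (φ ψ : ℤ → ℤ → ℤ → ℝ) : Prop :=
  ∀ i ∈ cellIdx N, ∀ j ∈ cellIdx N, ∀ k ∈ cellIdx N, φ i j k = ψ i j k

/-- Discrete maximum norm over the cells. -/
def cInf (N : ℕ) (φ : ℤ → ℤ → ℤ → ℝ) : ℝ :=
  sSup {r : ℝ | ∃ i ∈ cellIdx N, ∃ j ∈ cellIdx N, ∃ k ∈ cellIdx N, r = |φ i j k|}

/-- `D_x φ` at the x-face `(i+1/2,j,k)` (recorded at index `(i,j,k)`);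
it vanishes at the boundary faces `i = 0, N` by the Neumann ghost values. -/
def Dx (N : ℕ) (h : ℝ) (φ : ℤ → ℤ → ℤ → ℝ) (i j k : ℤ) : ℝ :=
  (nExt N φ (i + 1) j k - nExt N φ i j k) / h

/-- `D_y φ` at the y-face `(i,j+1/2,k)`. -/
def Dy (N : ℕ) (h : ℝ) (φ : ℤ → ℤ → ℤ → ℝ) (i j k : ℤ) : ℝ :=
  (nExt N φ i (j + 1) k - nExt N φ i j k) / h

/-- `D_z φ` at the z-face `(i,j,k+1/2)`. -/
def Dz (N : ℕ) (h : ℝ) (φ : ℤ → ℤ → ℤ → ℝ) (i j k : ℤ) : ℝ :=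
  (nExt N φ i j (k + 1) - nExt N φ i j k) / h

/-- Cell-centered discrete Laplacian, using the Neumann ghost values. -/
def lapC (N : ℕ) (h : ℝ) (φ : ℤ → ℤ → ℤ → ℝ) (i j k : ℤ) : ℝ :=
  (nExt N φ (i + 1) j k + nExt N φ (i - 1) j k + nExt N φ i (j + 1) k +
      nExt N φ i (j - 1) k + nExt N φ i j (k + 1) + nExt N φ i j (k - 1) -
      6 * nExt N φ i j k) / h ^ 2

/-- `‖∇_h φ‖₂²`: sum of squared differences over all interior faces. -/
def gradSq (N : ℕ) (h : ℝ) (φ : ℤ → ℤ → ℤ → ℝ) : ℝ :=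
  h ^ 3 *
    ((∑ i ∈ faceIdx N, ∑ j ∈ cellIdx N, ∑ k ∈ cellIdx N, Dx N h φ i j k ^ 2) +
      (∑ i ∈ cellIdx N, ∑ j ∈ faceIdx N, ∑ k ∈ cellIdx N, Dy N h φ i j k ^ 2) +
      (∑ i ∈ cellIdx N, ∑ j ∈ cellIdx N, ∑ k ∈ faceIdx N, Dz N h φ i j k ^ 2))

/-- Face inner product `[f,g]_x`. -/
def ipFX (N : ℕ) (h : ℝ) (f g : ℤ → ℤ → ℤ → ℝ) : ℝ :=
  h ^ 3 / 2 * ∑ i ∈ cellIdx N, ∑ j ∈ cellIdx N, ∑ k ∈ cellIdx N,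
    (f i j k * g i j k + f (i - 1) j k * g (i - 1) j k)

/-- Face inner product `[f,g]_y`. -/
def ipFY (N : ℕ) (h : ℝ) (f g : ℤ → ℤ → ℤ → ℝ) : ℝ :=
  h ^ 3 / 2 * ∑ i ∈ cellIdx N, ∑ j ∈ cellIdx N, ∑ k ∈ cellIdx N,
    (f i j k * g i j k + f i (j - 1) k * g i (j - 1) k)

/-- Face inner product `[f,g]_z`. -/
def ipFZ (N : ℕ) (h : ℝ) (f g : ℤ → ℤ → ℤ → ℝ) : ℝ :=
  h ^ 3 / 2 * ∑ i ∈ cellIdx N, ∑ j ∈ cellIdx N, ∑ k ∈ cellIdx N,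
    (f i j k * g i j k + f i j (k - 1) * g i j (k - 1))

/-- MAC inner product of two vector fields. -/
def macIP (N : ℕ) (h : ℝ) (ux uy uz vx vy vz : ℤ → ℤ → ℤ → ℝ) : ℝ :=
  ipFX N h ux vx + ipFY N h uy vy + ipFZ N h uz vz

/-- Discrete divergence at the cell `(i,j,k)`. -/
def divH (h : ℝ) (ux uy uz : ℤ → ℤ → ℤ → ℝ) (i j k : ℤ) : ℝ :=
  (ux i j k - ux (i - 1) j k + uy i j k - uy i (j - 1) k +
    uz i j k - uz i j (k - 1)) / h

/-- No-penetration boundary condition: the normal boundary face values vanish. -/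
def NoPen (N : ℕ) (ux uy uz : ℤ → ℤ → ℤ → ℝ) : Prop :=
  (∀ j ∈ cellIdx N, ∀ k ∈ cellIdx N, ux 0 j k = 0 ∧ ux (N : ℤ) j k = 0) ∧
  (∀ i ∈ cellIdx N, ∀ k ∈ cellIdx N, uy i 0 k = 0 ∧ uy i (N : ℤ) k = 0) ∧
  (∀ i ∈ cellIdx N, ∀ j ∈ cellIdx N, uz i j 0 = 0 ∧ uz i j (N : ℤ) = 0)

/-- Free-slip (reflection) extension of the x-face component in the
tangential directions. -/
def fExtX (N : ℕ) (f : ℤ → ℤ → ℤ → ℝ) (i j k : ℤ) : ℝ :=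
  f i (clampIdx N j) (clampIdx N k)

/-- Free-slip extension of the y-face component. -/
def fExtY (N : ℕ) (f : ℤ → ℤ → ℤ → ℝ) (i j k : ℤ) : ℝ :=
  f (clampIdx N i) j (clampIdx N k)

/-- Free-slip extension of the z-face component. -/
def fExtZ (N : ℕ) (f : ℤ → ℤ → ℤ → ℝ) (i j k : ℤ) : ℝ :=
  f (clampIdx N i) (clampIdx N j) k

/-- Face-centered discrete Laplacian of the x-component (seven-point stencil,
free-slip ghost values in the tangential directions). -/
def lapFX (N : ℕ) (h : ℝ) (f : ℤ → ℤ → ℤ → ℝ) (i j k : ℤ) : ℝ :=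
  (fExtX N f (i + 1) j k + fExtX N f (i - 1) j k + fExtX N f i (j + 1) k +
      fExtX N f i (j - 1) k + fExtX N f i j (k + 1) + fExtX N f i j (k - 1) -
      6 * fExtX N f i j k) / h ^ 2

/-- Face-centered discrete Laplacian of the y-component. -/
def lapFY (N : ℕ) (h : ℝ) (f : ℤ → ℤ → ℤ → ℝ) (i j k : ℤ) : ℝ :=
  (fExtY N f (i + 1) j k + fExtY N f (i - 1) j k + fExtY N f i (j + 1) k +
      fExtY N f i (j - 1) k + fExtY N f i j (k + 1) + fExtY N f i j (k - 1) -
      6 * fExtY N f i j k) / h ^ 2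

/-- Face-centered discrete Laplacian of the z-component. -/
def lapFZ (N : ℕ) (h : ℝ) (f : ℤ → ℤ → ℤ → ℝ) (i j k : ℤ) : ℝ :=
  (fExtZ N f (i + 1) j k + fExtZ N f (i - 1) j k + fExtZ N f i (j + 1) k +
      fExtZ N f i (j - 1) k + fExtZ N f i j (k + 1) + fExtZ N f i j (k - 1) -
      6 * fExtZ N f i j k) / h ^ 2

/-- Face average `A_x φ` at the x-face `(i+1/2,j,k)`. -/
def AxF (N : ℕ) (φ : ℤ → ℤ → ℤ → ℝ) (i j k : ℤ) : ℝ :=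
  (nExt N φ (i + 1) j k + nExt N φ i j k) / 2

/-- Face average `A_y φ`. -/
def AyF (N : ℕ) (φ : ℤ → ℤ → ℤ → ℝ) (i j k : ℤ) : ℝ :=
  (nExt N φ i (j + 1) k + nExt N φ i j k) / 2

/-- Face average `A_z φ`. -/
def AzF (N : ℕ) (φ : ℤ → ℤ → ℤ → ℝ) (i j k : ℤ) : ℝ :=
  (nExt N φ i j (k + 1) + nExt N φ i j k) / 2

/-- A solution `(φ^{n+1}, μ^{n+1}, p^{n+1}, u^{n+1})` of the fully discrete,
convex-splitting scheme for the Cahn–Hilliard–Stokes system (data `φⁿ`,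
parameters `s, ε, θ₀, γ`); the free-slip and Neumann ghost values are built
into the discrete operators, and `‖φ^{n+1}‖_∞ < 1`. -/
def SchemeSol (N : ℕ) (h s ε θ γ : ℝ)
    (φn φ μ p ux uy uz : ℤ → ℤ → ℤ → ℝ) : Prop :=
  NoPen N ux uy uz ∧ cInf N φ < 1 ∧
  (∀ i ∈ cellIdx N, ∀ j ∈ cellIdx N, ∀ k ∈ cellIdx N,
    φ i j k - φn i j k =
      s * lapC N h μ i j k -
        s * divH h (fun a b c => AxF N φn a b c * ux a b c)
            (fun a b c => AyF N φn a b c * uy a b c)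
            (fun a b c => AzF N φn a b c * uz a b c) i j k) ∧
  (∀ i ∈ cellIdx N, ∀ j ∈ cellIdx N, ∀ k ∈ cellIdx N,
    μ i j k = Real.log (1 + φ i j k) - Real.log (1 - φ i j k) -
      θ * φn i j k - ε ^ 2 * lapC N h φ i j k) ∧
  (∀ i ∈ cellIdx N, ∀ j ∈ cellIdx N, ∀ k ∈ cellIdx N,
    divH h ux uy uz i j k = 0) ∧
  (∀ i ∈ faceIdx N, ∀ j ∈ cellIdx N, ∀ k ∈ cellIdx N,
    -lapFX N h ux i j k + ux i j k + Dx N h p i j k +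
      γ * (AxF N φn i j k * Dx N h μ i j k) = 0) ∧
  (∀ i ∈ cellIdx N, ∀ j ∈ faceIdx N, ∀ k ∈ cellIdx N,
    -lapFY N h uy i j k + uy i j k + Dy N h p i j k +
      γ * (AyF N φn i j k * Dy N h μ i j k) = 0) ∧
  (∀ i ∈ cellIdx N, ∀ j ∈ cellIdx N, ∀ k ∈ faceIdx N,
    -lapFZ N h uz i j k + uz i j k + Dz N h p i j k +
      γ * (AzF N φn i j k * Dz N h μ i j k) = 0)

/-- Discrete Flory–Huggins free energy. -/
def Fh (N : ℕ) (h ε θ : ℝ) (φ : ℤ → ℤ → ℤ → ℝ) : ℝ :=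
  h ^ 3 * ∑ i ∈ cellIdx N, ∑ j ∈ cellIdx N, ∑ k ∈ cellIdx N,
      ((1 + φ i j k) * Real.log (1 + φ i j k) +
        (1 - φ i j k) * Real.log (1 - φ i j k) - θ / 2 * φ i j k ^ 2) +
    ε ^ 2 / 2 * gradSq N h φ

/-! ## Auxiliary lemmas -/

section Aux

lemma shiftSum (a b : ℤ) (f : ℤ → ℝ) :
    ∑ i ∈ Icc (a+1) (b+1), f i = ∑ i ∈ Icc a b, f (i+1) := by
  rw [← Finset.map_add_right_Icc a b 1, Finset.sum_map]
  rfl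

lemma splitTop (a b : ℤ) (hab : a ≤ b) (f : ℤ → ℝ) :
    ∑ i ∈ Icc a b, f i = (∑ i ∈ Icc a (b-1), f i) + f b := by
  have : Icc a b = insert b (Icc a (b-1)) := by
    ext x; simp [Finset.mem_Icc, Finset.mem_insert]; omega
  rw [this, Finset.sum_insert (by simp [Finset.mem_Icc]), add_comm]

lemma splitBot (a b : ℤ) (hab : a ≤ b) (f : ℤ → ℝ) :
    ∑ i ∈ Icc a b, f i = f a + ∑ i ∈ Icc (a+1) b, f i := by
  have : Icc a b = insert a (Icc (a+1) b) := by
    ext x; simp [Finset.mem_Icc, Finset.mem_insert]; omega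
  rw [this, Finset.sum_insert (by simp [Finset.mem_Icc])]

/-- 1D cell summation by parts. -/
lemma sbp1d (N : ℕ) (hN : 0 < N) (f g : ℤ → ℝ)
    (hf0 : f 0 = f 1) (hfN : f ((N:ℤ)+1) = f N) :
    ∑ i ∈ Icc (1:ℤ) N, g i * (f (i+1) + f (i-1) - 2 * f i) =
      -∑ i ∈ Icc (1:ℤ) ((N:ℤ)-1), (f (i+1) - f i) * (g (i+1) - g i) := by
  have hN1 : (1:ℤ) ≤ N := by exact_mod_cast hN
  have e1 : ∑ i ∈ Icc (1:ℤ) N, g i * (f (i+1) - f i) =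
      ∑ i ∈ Icc (1:ℤ) ((N:ℤ)-1), g i * (f (i+1) - f i) := by
    rw [splitTop 1 N hN1, hfN]; simp
  have e2 : ∑ i ∈ Icc (1:ℤ) N, g i * (f (i-1) - f i) =
      ∑ i ∈ Icc (1:ℤ) ((N:ℤ)-1), g (i+1) * (f i - f (i+1)) := by
    rw [splitBot 1 N hN1]
    have : f (1-1 : ℤ) - f 1 = 0 := by norm_num [hf0]
    rw [this, mul_zero, zero_add]
    conv_lhs => rw [show (N:ℤ) = ((N:ℤ)-1)+1 from by ring]
    rw [shiftSum]
    apply Finset.sum_congr rfl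
    intro i _; ring_nf
  have e3 : ∑ i ∈ Icc (1:ℤ) N, g i * (f (i+1) + f (i-1) - 2 * f i) =
      (∑ i ∈ Icc (1:ℤ) N, g i * (f (i+1) - f i)) +
      (∑ i ∈ Icc (1:ℤ) N, g i * (f (i-1) - f i)) := by
    rw [← Finset.sum_add_distrib]; apply Finset.sum_congr rfl; intro i _; ring
  rw [e3, e1, e2, ← Finset.sum_add_distrib, ← Finset.sum_neg_distrib]
  apply Finset.sum_congr rfl; intro i _; ring

/-- 1D divergence summation by parts: velocity vanishing at boundary faces. -/
lemma div_sbp1d (N : ℕ) (hN : 0 < N) (v g : ℤ → ℝ)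
    (hv0 : v 0 = 0) (hvN : v N = 0) :
    ∑ i ∈ Icc (1:ℤ) N, g i * (v i - v (i-1)) =
      -∑ i ∈ Icc (1:ℤ) ((N:ℤ)-1), v i * (g (i+1) - g i) := by
  have hN1 : (1:ℤ) ≤ N := by exact_mod_cast hN
  have e1 : ∑ i ∈ Icc (1:ℤ) N, g i * v i =
      ∑ i ∈ Icc (1:ℤ) ((N:ℤ)-1), g i * v i := by
    rw [splitTop 1 N hN1, hvN, mul_zero, add_zero]
  have e2 : ∑ i ∈ Icc (1:ℤ) N, g i * v (i-1) =
      ∑ i ∈ Icc (1:ℤ) ((N:ℤ)-1), g (i+1) * v i := by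
    rw [splitBot 1 N hN1]
    have : v (1-1:ℤ) = 0 := by norm_num [hv0]
    rw [this, mul_zero, zero_add]
    conv_lhs => rw [show (N:ℤ) = ((N:ℤ)-1)+1 from by ring]
    rw [shiftSum]
    apply Finset.sum_congr rfl; intro i _; ring_nf
  have e3 : ∑ i ∈ Icc (1:ℤ) N, g i * (v i - v (i-1)) =
      (∑ i ∈ Icc (1:ℤ) N, g i * v i) - (∑ i ∈ Icc (1:ℤ) N, g i * v (i-1)) := by
    rw [← Finset.sum_sub_distrib]; apply Finset.sum_congr rfl; intro i _; ring
  rw [e3, e1, e2, ← Finset.sum_sub_distrib, ← Finset.sum_neg_distrib]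
  apply Finset.sum_congr rfl; intro i _; ring

/-- 1D reduction of face sum with vanishing boundary products. -/
lemma face_red1d (N : ℕ) (hN : 0 < N) (p : ℤ → ℝ)
    (hp0 : p 0 = 0) (hpN : p N = 0) :
    (1/2 : ℝ) * ∑ i ∈ Icc (1:ℤ) N, (p i + p (i-1)) =
      ∑ i ∈ Icc (1:ℤ) ((N:ℤ)-1), p i := by
  have hN1 : (1:ℤ) ≤ N := by exact_mod_cast hN
  have e1 : ∑ i ∈ Icc (1:ℤ) N, p i = ∑ i ∈ Icc (1:ℤ) ((N:ℤ)-1), p i := by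
    rw [splitTop 1 N hN1, hpN, add_zero]
  have e2 : ∑ i ∈ Icc (1:ℤ) N, p (i-1) = ∑ i ∈ Icc (1:ℤ) ((N:ℤ)-1), p i := by
    rw [splitBot 1 N hN1]
    have h0 : p (1-1:ℤ) = 0 := by norm_num [hp0]
    rw [h0, zero_add]
    conv_lhs => rw [show (N:ℤ) = ((N:ℤ)-1)+1 from by ring]
    rw [shiftSum]
    apply Finset.sum_congr rfl; intro i _; ring_nf
  rw [Finset.sum_add_distrib, e1, e2]; ring

lemma clamp_mem {N : ℕ} {i : ℤ} (hi : i ∈ cellIdx N) : clampIdx N i = i := by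
  simp [cellIdx, Finset.mem_Icc] at hi; simp [clampIdx]; omega

lemma clamp01 (N : ℕ) (hN : 0 < N) : clampIdx N 0 = clampIdx N 1 := by
  have : (1:ℤ) ≤ N := by exact_mod_cast hN
  simp [clampIdx]

lemma clampTop (N : ℕ) (hN : 0 < N) : clampIdx N ((N:ℤ)+1) = clampIdx N (N:ℤ) := by
  have : (1:ℤ) ≤ N := by exact_mod_cast hN
  simp [clampIdx]

lemma mem_cell {N : ℕ} {i : ℤ} : i ∈ cellIdx N ↔ 1 ≤ i ∧ i ≤ (N:ℤ) := by
  simp [cellIdx, Finset.mem_Icc]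

lemma face_mem_cell {N : ℕ} {i : ℤ} (hi : i ∈ faceIdx N) : i ∈ cellIdx N := by
  simp [faceIdx, Finset.mem_Icc] at hi; rw [mem_cell]; omega

lemma face_succ_mem_cell {N : ℕ} {i : ℤ} (hi : i ∈ faceIdx N) : i + 1 ∈ cellIdx N := by
  simp [faceIdx, Finset.mem_Icc] at hi; rw [mem_cell]; omega

lemma nExt_cell {N : ℕ} (φ : ℤ → ℤ → ℤ → ℝ) {i j k : ℤ}
    (hi : i ∈ cellIdx N) (hj : j ∈ cellIdx N) (hk : k ∈ cellIdx N) :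
    nExt N φ i j k = φ i j k := by
  unfold nExt; rw [clamp_mem hi, clamp_mem hj, clamp_mem hk]

lemma sum_rot_i {A B C : Finset ℤ} (f : ℤ → ℤ → ℤ → ℝ) :
    ∑ i ∈ A, ∑ j ∈ B, ∑ k ∈ C, f i j k = ∑ j ∈ B, ∑ k ∈ C, ∑ i ∈ A, f i j k := by
  rw [Finset.sum_comm]
  exact Finset.sum_congr rfl fun j _ => Finset.sum_comm

lemma sum_rot_j {A B C : Finset ℤ} (f : ℤ → ℤ → ℤ → ℝ) :
    ∑ i ∈ A, ∑ j ∈ B, ∑ k ∈ C, f i j k = ∑ i ∈ A, ∑ k ∈ C, ∑ j ∈ B, f i j k :=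
  Finset.sum_congr rfl fun _ _ => Finset.sum_comm

lemma convex_log_ineq (θ : ℝ) (hθ : 0 < θ) (x y : ℝ) (hx : |x| < 1) (hy : |y| < 1) :
    ((1+x) * Real.log (1+x) + (1-x) * Real.log (1-x) - θ/2 * x^2) -
      ((1+y) * Real.log (1+y) + (1-y) * Real.log (1-y) - θ/2 * y^2) ≤
    (Real.log (1+x) - Real.log (1-x) - θ * y) * (x - y) := by
  rw [abs_lt] at hx hy
  have h1x : (0:ℝ) < 1 + x := by linarith
  have h2x : (0:ℝ) < 1 - x := by linarith
  have h1y : (0:ℝ) < 1 + y := by linarith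
  have h2y : (0:ℝ) < 1 - y := by linarith
  have k1 : Real.log (1+x) - Real.log (1+y) ≤ (1+x)/(1+y) - 1 := by
    rw [← Real.log_div (by linarith) (by linarith)]
    exact Real.log_le_sub_one_of_pos (by positivity)
  have k2 : Real.log (1-x) - Real.log (1-y) ≤ (1-x)/(1-y) - 1 := by
    rw [← Real.log_div (by linarith) (by linarith)]
    exact Real.log_le_sub_one_of_pos (by positivity)
  have k1' : (1+y) * (Real.log (1+x) - Real.log (1+y)) ≤ x - y := by
    have := mul_le_mul_of_nonneg_left k1 (le_of_lt h1y)
    have hne : (1+y) ≠ 0 := ne_of_gt h1y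
    calc (1+y) * (Real.log (1+x) - Real.log (1+y)) ≤ (1+y) * ((1+x)/(1+y) - 1) := this
      _ = x - y := by field_simp; ring
  have k2' : (1-y) * (Real.log (1-x) - Real.log (1-y)) ≤ y - x := by
    have := mul_le_mul_of_nonneg_left k2 (le_of_lt h2y)
    have hne : (1-y) ≠ 0 := ne_of_gt h2y
    calc (1-y) * (Real.log (1-x) - Real.log (1-y)) ≤ (1-y) * ((1-x)/(1-y) - 1) := this
      _ = y - x := by field_simp; ring
  nlinarith [sq_nonneg (x - y)]

end Aux
section Aux2

lemma sum3_congr {A B C : Finset ℤ} {f g : ℤ → ℤ → ℤ → ℝ}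
    (h : ∀ i ∈ A, ∀ j ∈ B, ∀ k ∈ C, f i j k = g i j k) :
    ∑ i ∈ A, ∑ j ∈ B, ∑ k ∈ C, f i j k = ∑ i ∈ A, ∑ j ∈ B, ∑ k ∈ C, g i j k :=
  Finset.sum_congr rfl fun i hi => Finset.sum_congr rfl fun j hj =>
    Finset.sum_congr rfl fun k hk => h i hi j hj k hk

lemma sum3_le {A B C : Finset ℤ} {f g : ℤ → ℤ → ℤ → ℝ}
    (h : ∀ i ∈ A, ∀ j ∈ B, ∀ k ∈ C, f i j k ≤ g i j k) :
    ∑ i ∈ A, ∑ j ∈ B, ∑ k ∈ C, f i j k ≤ ∑ i ∈ A, ∑ j ∈ B, ∑ k ∈ C, g i j k :=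
  Finset.sum_le_sum fun i hi => Finset.sum_le_sum fun j hj =>
    Finset.sum_le_sum fun k hk => h i hi j hj k hk

lemma sum3_add {A B C : Finset ℤ} (f g : ℤ → ℤ → ℤ → ℝ) :
    ∑ i ∈ A, ∑ j ∈ B, ∑ k ∈ C, (f i j k + g i j k) =
      (∑ i ∈ A, ∑ j ∈ B, ∑ k ∈ C, f i j k) + ∑ i ∈ A, ∑ j ∈ B, ∑ k ∈ C, g i j k := by
  simp [Finset.sum_add_distrib]

lemma sum3_sub {A B C : Finset ℤ} (f g : ℤ → ℤ → ℤ → ℝ) :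
    ∑ i ∈ A, ∑ j ∈ B, ∑ k ∈ C, (f i j k - g i j k) =
      (∑ i ∈ A, ∑ j ∈ B, ∑ k ∈ C, f i j k) - ∑ i ∈ A, ∑ j ∈ B, ∑ k ∈ C, g i j k := by
  simp [Finset.sum_sub_distrib]

lemma sum3_smul {A B C : Finset ℤ} (c : ℝ) (f : ℤ → ℤ → ℤ → ℝ) :
    ∑ i ∈ A, ∑ j ∈ B, ∑ k ∈ C, (c * f i j k) =
      c * ∑ i ∈ A, ∑ j ∈ B, ∑ k ∈ C, f i j k := by
  simp [Finset.mul_sum]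

lemma sum3_div {A B C : Finset ℤ} (c : ℝ) (f : ℤ → ℤ → ℤ → ℝ) :
    ∑ i ∈ A, ∑ j ∈ B, ∑ k ∈ C, (f i j k / c) =
      (∑ i ∈ A, ∑ j ∈ B, ∑ k ∈ C, f i j k) / c := by
  simp [← Finset.sum_div]

lemma sum3_neg {A B C : Finset ℤ} (f : ℤ → ℤ → ℤ → ℝ) :
    ∑ i ∈ A, ∑ j ∈ B, ∑ k ∈ C, (-f i j k) =
      -∑ i ∈ A, ∑ j ∈ B, ∑ k ∈ C, f i j k := by
  simp [Finset.sum_neg_distrib]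

/-- Discrete gradient inner product. -/
def gradIP (N : ℕ) (h : ℝ) (φ ψ : ℤ → ℤ → ℤ → ℝ) : ℝ :=
  h ^ 3 *
    ((∑ i ∈ faceIdx N, ∑ j ∈ cellIdx N, ∑ k ∈ cellIdx N,
        Dx N h φ i j k * Dx N h ψ i j k) +
      (∑ i ∈ cellIdx N, ∑ j ∈ faceIdx N, ∑ k ∈ cellIdx N,
        Dy N h φ i j k * Dy N h ψ i j k) +
      (∑ i ∈ cellIdx N, ∑ j ∈ cellIdx N, ∑ k ∈ faceIdx N,
        Dz N h φ i j k * Dz N h ψ i j k))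

lemma gradIP_self (N : ℕ) (h : ℝ) (φ : ℤ → ℤ → ℤ → ℝ) :
    gradIP N h φ φ = gradSq N h φ := by
  unfold gradIP gradSq
  have e1 := sum3_congr (A := faceIdx N) (B := cellIdx N) (C := cellIdx N)
    (f := fun i j k => Dx N h φ i j k * Dx N h φ i j k)
    (g := fun i j k => Dx N h φ i j k ^ 2) (fun i _ j _ k _ => (sq _).symm)
  have e2 := sum3_congr (A := cellIdx N) (B := faceIdx N) (C := cellIdx N)
    (f := fun i j k => Dy N h φ i j k * Dy N h φ i j k)
    (g := fun i j k => Dy N h φ i j k ^ 2) (fun i _ j _ k _ => (sq _).symm)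
  have e3 := sum3_congr (A := cellIdx N) (B := cellIdx N) (C := faceIdx N)
    (f := fun i j k => Dz N h φ i j k * Dz N h φ i j k)
    (g := fun i j k => Dz N h φ i j k ^ 2) (fun i _ j _ k _ => (sq _).symm)
  rw [e1, e2, e3]

/-- x-direction 3D summation by parts (stencil level). -/
lemma sbpx (N : ℕ) (hN : 0 < N) (φ ψ : ℤ → ℤ → ℤ → ℝ) :
    ∑ i ∈ cellIdx N, ∑ j ∈ cellIdx N, ∑ k ∈ cellIdx N,
      ψ i j k * (nExt N φ (i+1) j k + nExt N φ (i-1) j k - 2 * nExt N φ i j k) =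
    -∑ i ∈ faceIdx N, ∑ j ∈ cellIdx N, ∑ k ∈ cellIdx N,
      (nExt N φ (i+1) j k - nExt N φ i j k) * (nExt N ψ (i+1) j k - nExt N ψ i j k) := by
  rw [sum_rot_i]
  have key : ∀ j ∈ cellIdx N, ∀ k ∈ cellIdx N,
      ∑ i ∈ cellIdx N, ψ i j k *
        (nExt N φ (i+1) j k + nExt N φ (i-1) j k - 2 * nExt N φ i j k) =
      -∑ i ∈ faceIdx N,
        (nExt N φ (i+1) j k - nExt N φ i j k) *
          (nExt N ψ (i+1) j k - nExt N ψ i j k) := by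
    intro j hj k hk
    have h0 : nExt N φ 0 j k = nExt N φ 1 j k := by unfold nExt; rw [clamp01 N hN]
    have hT : nExt N φ ((N:ℤ)+1) j k = nExt N φ (N:ℤ) j k := by
      unfold nExt; rw [clampTop N hN]
    rw [show cellIdx N = Icc (1:ℤ) (N:ℤ) from rfl,
        show faceIdx N = Icc (1:ℤ) ((N:ℤ)-1) from rfl,
        sbp1d N hN (fun t => nExt N φ t j k) (fun t => ψ t j k) h0 hT]
    congr 1
    apply Finset.sum_congr rfl
    intro i hi
    have hi1 : i ∈ cellIdx N := face_mem_cell (N := N) (by exact hi)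
    have hi2 : i + 1 ∈ cellIdx N := face_succ_mem_cell (N := N) (by exact hi)
    rw [nExt_cell ψ hi2 hj hk, nExt_cell ψ hi1 hj hk]
  calc ∑ j ∈ cellIdx N, ∑ k ∈ cellIdx N, ∑ i ∈ cellIdx N,
        ψ i j k * (nExt N φ (i+1) j k + nExt N φ (i-1) j k - 2 * nExt N φ i j k)
      = ∑ j ∈ cellIdx N, ∑ k ∈ cellIdx N,
          (-∑ i ∈ faceIdx N, (nExt N φ (i+1) j k - nExt N φ i j k) *
            (nExt N ψ (i+1) j k - nExt N ψ i j k)) :=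
        Finset.sum_congr rfl fun j hj => Finset.sum_congr rfl fun k hk => key j hj k hk
    _ = -∑ j ∈ cellIdx N, ∑ k ∈ cellIdx N, ∑ i ∈ faceIdx N,
          (nExt N φ (i+1) j k - nExt N φ i j k) *
            (nExt N ψ (i+1) j k - nExt N ψ i j k) := by
        simp [Finset.sum_neg_distrib]
    _ = -∑ i ∈ faceIdx N, ∑ j ∈ cellIdx N, ∑ k ∈ cellIdx N,
          (nExt N φ (i+1) j k - nExt N φ i j k) *
            (nExt N ψ (i+1) j k - nExt N ψ i j k) := by
        rw [sum_rot_i (A := faceIdx N) (B := cellIdx N) (C := cellIdx N)]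

/-- y-direction 3D summation by parts. -/
lemma sbpy (N : ℕ) (hN : 0 < N) (φ ψ : ℤ → ℤ → ℤ → ℝ) :
    ∑ i ∈ cellIdx N, ∑ j ∈ cellIdx N, ∑ k ∈ cellIdx N,
      ψ i j k * (nExt N φ i (j+1) k + nExt N φ i (j-1) k - 2 * nExt N φ i j k) =
    -∑ i ∈ cellIdx N, ∑ j ∈ faceIdx N, ∑ k ∈ cellIdx N,
      (nExt N φ i (j+1) k - nExt N φ i j k) * (nExt N ψ i (j+1) k - nExt N ψ i j k) := by
  rw [sum_rot_j]
  have key : ∀ i ∈ cellIdx N, ∀ k ∈ cellIdx N,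
      ∑ j ∈ cellIdx N, ψ i j k *
        (nExt N φ i (j+1) k + nExt N φ i (j-1) k - 2 * nExt N φ i j k) =
      -∑ j ∈ faceIdx N,
        (nExt N φ i (j+1) k - nExt N φ i j k) *
          (nExt N ψ i (j+1) k - nExt N ψ i j k) := by
    intro i hi k hk
    have h0 : nExt N φ i 0 k = nExt N φ i 1 k := by unfold nExt; rw [clamp01 N hN]
    have hT : nExt N φ i ((N:ℤ)+1) k = nExt N φ i (N:ℤ) k := by
      unfold nExt; rw [clampTop N hN]
    rw [show cellIdx N = Icc (1:ℤ) (N:ℤ) from rfl,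
        show faceIdx N = Icc (1:ℤ) ((N:ℤ)-1) from rfl,
        sbp1d N hN (fun t => nExt N φ i t k) (fun t => ψ i t k) h0 hT]
    congr 1
    apply Finset.sum_congr rfl
    intro j hj
    have hj1 : j ∈ cellIdx N := face_mem_cell (N := N) (by exact hj)
    have hj2 : j + 1 ∈ cellIdx N := face_succ_mem_cell (N := N) (by exact hj)
    rw [nExt_cell ψ hi hj2 hk, nExt_cell ψ hi hj1 hk]
  calc ∑ i ∈ cellIdx N, ∑ k ∈ cellIdx N, ∑ j ∈ cellIdx N,
        ψ i j k * (nExt N φ i (j+1) k + nExt N φ i (j-1) k - 2 * nExt N φ i j k)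
      = ∑ i ∈ cellIdx N, ∑ k ∈ cellIdx N,
          (-∑ j ∈ faceIdx N, (nExt N φ i (j+1) k - nExt N φ i j k) *
            (nExt N ψ i (j+1) k - nExt N ψ i j k)) :=
        Finset.sum_congr rfl fun i hi => Finset.sum_congr rfl fun k hk => key i hi k hk
    _ = -∑ i ∈ cellIdx N, ∑ k ∈ cellIdx N, ∑ j ∈ faceIdx N,
          (nExt N φ i (j+1) k - nExt N φ i j k) *
            (nExt N ψ i (j+1) k - nExt N ψ i j k) := by
        simp [Finset.sum_neg_distrib]
    _ = -∑ i ∈ cellIdx N, ∑ j ∈ faceIdx N, ∑ k ∈ cellIdx N,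
          (nExt N φ i (j+1) k - nExt N φ i j k) *
            (nExt N ψ i (j+1) k - nExt N ψ i j k) := by
        rw [sum_rot_j (A := cellIdx N) (B := faceIdx N) (C := cellIdx N)]

/-- z-direction 3D summation by parts. -/
lemma sbpz (N : ℕ) (hN : 0 < N) (φ ψ : ℤ → ℤ → ℤ → ℝ) :
    ∑ i ∈ cellIdx N, ∑ j ∈ cellIdx N, ∑ k ∈ cellIdx N,
      ψ i j k * (nExt N φ i j (k+1) + nExt N φ i j (k-1) - 2 * nExt N φ i j k) =
    -∑ i ∈ cellIdx N, ∑ j ∈ cellIdx N, ∑ k ∈ faceIdx N,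
      (nExt N φ i j (k+1) - nExt N φ i j k) * (nExt N ψ i j (k+1) - nExt N ψ i j k) := by
  have key : ∀ i ∈ cellIdx N, ∀ j ∈ cellIdx N,
      ∑ k ∈ cellIdx N, ψ i j k *
        (nExt N φ i j (k+1) + nExt N φ i j (k-1) - 2 * nExt N φ i j k) =
      -∑ k ∈ faceIdx N,
        (nExt N φ i j (k+1) - nExt N φ i j k) *
          (nExt N ψ i j (k+1) - nExt N ψ i j k) := by
    intro i hi j hj
    have h0 : nExt N φ i j 0 = nExt N φ i j 1 := by unfold nExt; rw [clamp01 N hN]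
    have hT : nExt N φ i j ((N:ℤ)+1) = nExt N φ i j (N:ℤ) := by
      unfold nExt; rw [clampTop N hN]
    rw [show cellIdx N = Icc (1:ℤ) (N:ℤ) from rfl,
        show faceIdx N = Icc (1:ℤ) ((N:ℤ)-1) from rfl,
        sbp1d N hN (fun t => nExt N φ i j t) (fun t => ψ i j t) h0 hT]
    congr 1
    apply Finset.sum_congr rfl
    intro k hk
    have hk1 : k ∈ cellIdx N := face_mem_cell (N := N) (by exact hk)
    have hk2 : k + 1 ∈ cellIdx N := face_succ_mem_cell (N := N) (by exact hk)
    rw [nExt_cell ψ hi hj hk2, nExt_cell ψ hi hj hk1]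
  calc ∑ i ∈ cellIdx N, ∑ j ∈ cellIdx N, ∑ k ∈ cellIdx N,
        ψ i j k * (nExt N φ i j (k+1) + nExt N φ i j (k-1) - 2 * nExt N φ i j k)
      = ∑ i ∈ cellIdx N, ∑ j ∈ cellIdx N,
          (-∑ k ∈ faceIdx N, (nExt N φ i j (k+1) - nExt N φ i j k) *
            (nExt N ψ i j (k+1) - nExt N ψ i j k)) :=
        Finset.sum_congr rfl fun i hi => Finset.sum_congr rfl fun j hj => key i hi j hj
    _ = -∑ i ∈ cellIdx N, ∑ j ∈ cellIdx N, ∑ k ∈ faceIdx N,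
          (nExt N φ i j (k+1) - nExt N φ i j k) *
            (nExt N ψ i j (k+1) - nExt N ψ i j k) := by
        simp [Finset.sum_neg_distrib]

end Aux2
section Aux3

lemma sbp_lap (N : ℕ) (hN : 0 < N) (h : ℝ) (φ ψ : ℤ → ℤ → ℤ → ℝ) :
    cip N h ψ (fun i j k => lapC N h φ i j k) = -gradIP N h φ ψ := by
  have hpt : ∀ i ∈ cellIdx N, ∀ j ∈ cellIdx N, ∀ k ∈ cellIdx N,
      ψ i j k * lapC N h φ i j k =
      (ψ i j k * (nExt N φ (i+1) j k + nExt N φ (i-1) j k - 2 * nExt N φ i j k) +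
        ψ i j k * (nExt N φ i (j+1) k + nExt N φ i (j-1) k - 2 * nExt N φ i j k) +
        ψ i j k * (nExt N φ i j (k+1) + nExt N φ i j (k-1) - 2 * nExt N φ i j k)) / h^2 := by
    intro i _ j _ k _; unfold lapC; ring
  have e0 : ∑ i ∈ cellIdx N, ∑ j ∈ cellIdx N, ∑ k ∈ cellIdx N,
        ψ i j k * lapC N h φ i j k =
      ((∑ i ∈ cellIdx N, ∑ j ∈ cellIdx N, ∑ k ∈ cellIdx N,
          ψ i j k * (nExt N φ (i+1) j k + nExt N φ (i-1) j k - 2 * nExt N φ i j k)) +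
        (∑ i ∈ cellIdx N, ∑ j ∈ cellIdx N, ∑ k ∈ cellIdx N,
          ψ i j k * (nExt N φ i (j+1) k + nExt N φ i (j-1) k - 2 * nExt N φ i j k)) +
        (∑ i ∈ cellIdx N, ∑ j ∈ cellIdx N, ∑ k ∈ cellIdx N,
          ψ i j k * (nExt N φ i j (k+1) + nExt N φ i j (k-1) - 2 * nExt N φ i j k))) / h^2 := by
    rw [sum3_congr hpt, sum3_div, sum3_add, sum3_add]
  have dx : ∑ i ∈ faceIdx N, ∑ j ∈ cellIdx N, ∑ k ∈ cellIdx N,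
        Dx N h φ i j k * Dx N h ψ i j k =
      (∑ i ∈ faceIdx N, ∑ j ∈ cellIdx N, ∑ k ∈ cellIdx N,
        (nExt N φ (i+1) j k - nExt N φ i j k) * (nExt N ψ (i+1) j k - nExt N ψ i j k)) / h^2 := by
    rw [← sum3_div]
    exact sum3_congr fun i _ j _ k _ => by
      unfold Dx; rw [div_mul_div_comm, ← pow_two]
  have dy : ∑ i ∈ cellIdx N, ∑ j ∈ faceIdx N, ∑ k ∈ cellIdx N,
        Dy N h φ i j k * Dy N h ψ i j k =
      (∑ i ∈ cellIdx N, ∑ j ∈ faceIdx N, ∑ k ∈ cellIdx N,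
        (nExt N φ i (j+1) k - nExt N φ i j k) * (nExt N ψ i (j+1) k - nExt N ψ i j k)) / h^2 := by
    rw [← sum3_div]
    exact sum3_congr fun i _ j _ k _ => by
      unfold Dy; rw [div_mul_div_comm, ← pow_two]
  have dz : ∑ i ∈ cellIdx N, ∑ j ∈ cellIdx N, ∑ k ∈ faceIdx N,
        Dz N h φ i j k * Dz N h ψ i j k =
      (∑ i ∈ cellIdx N, ∑ j ∈ cellIdx N, ∑ k ∈ faceIdx N,
        (nExt N φ i j (k+1) - nExt N φ i j k) * (nExt N ψ i j (k+1) - nExt N ψ i j k)) / h^2 := by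
    rw [← sum3_div]
    exact sum3_congr fun i _ j _ k _ => by
      unfold Dz; rw [div_mul_div_comm, ← pow_two]
  simp only [cip]
  unfold gradIP
  rw [e0, sbpx N hN φ ψ, sbpy N hN φ ψ, sbpz N hN φ ψ, dx, dy, dz]
  ring

lemma Dx_sub (N : ℕ) (h : ℝ) (φ φn : ℤ → ℤ → ℤ → ℝ) (i j k : ℤ) :
    Dx N h (fun a b c => φ a b c - φn a b c) i j k =
      Dx N h φ i j k - Dx N h φn i j k := by
  simp only [Dx, nExt]; ring

lemma Dy_sub (N : ℕ) (h : ℝ) (φ φn : ℤ → ℤ → ℤ → ℝ) (i j k : ℤ) :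
    Dy N h (fun a b c => φ a b c - φn a b c) i j k =
      Dy N h φ i j k - Dy N h φn i j k := by
  simp only [Dy, nExt]; ring

lemma Dz_sub (N : ℕ) (h : ℝ) (φ φn : ℤ → ℤ → ℤ → ℝ) (i j k : ℤ) :
    Dz N h (fun a b c => φ a b c - φn a b c) i j k =
      Dz N h φ i j k - Dz N h φn i j k := by
  simp only [Dz, nExt]; ring

lemma sum3_sq (A B C : Finset ℤ) (a b : ℤ → ℤ → ℤ → ℝ) :
    (∑ i ∈ A, ∑ j ∈ B, ∑ k ∈ C, a i j k ^ 2) -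
        (∑ i ∈ A, ∑ j ∈ B, ∑ k ∈ C, b i j k ^ 2) =
      2 * (∑ i ∈ A, ∑ j ∈ B, ∑ k ∈ C, a i j k * (a i j k - b i j k)) -
        ∑ i ∈ A, ∑ j ∈ B, ∑ k ∈ C, (a i j k - b i j k) ^ 2 := by
  rw [← sum3_sub, ← sum3_smul, ← sum3_sub]
  exact sum3_congr fun i _ j _ k _ => by ring

lemma grad_diff (N : ℕ) (h : ℝ) (φ φn : ℤ → ℤ → ℤ → ℝ) :
    gradSq N h φ - gradSq N h φn =
      2 * gradIP N h φ (fun a b c => φ a b c - φn a b c) -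
        gradSq N h (fun a b c => φ a b c - φn a b c) := by
  unfold gradSq gradIP
  simp only [Dx_sub, Dy_sub, Dz_sub]
  have ex := sum3_sq (faceIdx N) (cellIdx N) (cellIdx N)
    (fun i j k => Dx N h φ i j k) (fun i j k => Dx N h φn i j k)
  have ey := sum3_sq (cellIdx N) (faceIdx N) (cellIdx N)
    (fun i j k => Dy N h φ i j k) (fun i j k => Dy N h φn i j k)
  have ez := sum3_sq (cellIdx N) (cellIdx N) (faceIdx N)
    (fun i j k => Dz N h φ i j k) (fun i j k => Dz N h φn i j k)
  linear_combination h^3 * ex + h^3 * ey + h^3 * ez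

end Aux3
section Aux4

lemma divx3 (N : ℕ) (hN : 0 < N) (g vx : ℤ → ℤ → ℤ → ℝ)
    (hbc : ∀ j ∈ cellIdx N, ∀ k ∈ cellIdx N, vx 0 j k = 0 ∧ vx (N:ℤ) j k = 0) :
    ∑ i ∈ cellIdx N, ∑ j ∈ cellIdx N, ∑ k ∈ cellIdx N,
      g i j k * (vx i j k - vx (i-1) j k) =
    -∑ i ∈ faceIdx N, ∑ j ∈ cellIdx N, ∑ k ∈ cellIdx N,
      vx i j k * (nExt N g (i+1) j k - nExt N g i j k) := by
  rw [sum_rot_i]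
  have key : ∀ j ∈ cellIdx N, ∀ k ∈ cellIdx N,
      ∑ i ∈ cellIdx N, g i j k * (vx i j k - vx (i-1) j k) =
      -∑ i ∈ faceIdx N, vx i j k * (nExt N g (i+1) j k - nExt N g i j k) := by
    intro j hj k hk
    rw [show cellIdx N = Icc (1:ℤ) (N:ℤ) from rfl,
        show faceIdx N = Icc (1:ℤ) ((N:ℤ)-1) from rfl,
        div_sbp1d N hN (fun t => vx t j k) (fun t => g t j k) (hbc j hj k hk).1
          (hbc j hj k hk).2]
    congr 1
    apply Finset.sum_congr rfl
    intro i hi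
    have hi1 : i ∈ cellIdx N := face_mem_cell (N := N) (by exact hi)
    have hi2 : i + 1 ∈ cellIdx N := face_succ_mem_cell (N := N) (by exact hi)
    rw [nExt_cell g hi2 hj hk, nExt_cell g hi1 hj hk]
  calc ∑ j ∈ cellIdx N, ∑ k ∈ cellIdx N, ∑ i ∈ cellIdx N,
        g i j k * (vx i j k - vx (i-1) j k)
      = ∑ j ∈ cellIdx N, ∑ k ∈ cellIdx N,
          (-∑ i ∈ faceIdx N, vx i j k * (nExt N g (i+1) j k - nExt N g i j k)) :=
        Finset.sum_congr rfl fun j hj => Finset.sum_congr rfl fun k hk => key j hj k hk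
    _ = -∑ j ∈ cellIdx N, ∑ k ∈ cellIdx N, ∑ i ∈ faceIdx N,
          vx i j k * (nExt N g (i+1) j k - nExt N g i j k) := by
        simp [Finset.sum_neg_distrib]
    _ = -∑ i ∈ faceIdx N, ∑ j ∈ cellIdx N, ∑ k ∈ cellIdx N,
          vx i j k * (nExt N g (i+1) j k - nExt N g i j k) := by
        rw [sum_rot_i (A := faceIdx N) (B := cellIdx N) (C := cellIdx N)]

lemma divy3 (N : ℕ) (hN : 0 < N) (g vy : ℤ → ℤ → ℤ → ℝ)
    (hbc : ∀ i ∈ cellIdx N, ∀ k ∈ cellIdx N, vy i 0 k = 0 ∧ vy i (N:ℤ) k = 0) :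
    ∑ i ∈ cellIdx N, ∑ j ∈ cellIdx N, ∑ k ∈ cellIdx N,
      g i j k * (vy i j k - vy i (j-1) k) =
    -∑ i ∈ cellIdx N, ∑ j ∈ faceIdx N, ∑ k ∈ cellIdx N,
      vy i j k * (nExt N g i (j+1) k - nExt N g i j k) := by
  rw [sum_rot_j]
  have key : ∀ i ∈ cellIdx N, ∀ k ∈ cellIdx N,
      ∑ j ∈ cellIdx N, g i j k * (vy i j k - vy i (j-1) k) =
      -∑ j ∈ faceIdx N, vy i j k * (nExt N g i (j+1) k - nExt N g i j k) := by
    intro i hi k hk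
    rw [show cellIdx N = Icc (1:ℤ) (N:ℤ) from rfl,
        show faceIdx N = Icc (1:ℤ) ((N:ℤ)-1) from rfl,
        div_sbp1d N hN (fun t => vy i t k) (fun t => g i t k) (hbc i hi k hk).1
          (hbc i hi k hk).2]
    congr 1
    apply Finset.sum_congr rfl
    intro j hj
    have hj1 : j ∈ cellIdx N := face_mem_cell (N := N) (by exact hj)
    have hj2 : j + 1 ∈ cellIdx N := face_succ_mem_cell (N := N) (by exact hj)
    rw [nExt_cell g hi hj2 hk, nExt_cell g hi hj1 hk]
  calc ∑ i ∈ cellIdx N, ∑ k ∈ cellIdx N, ∑ j ∈ cellIdx N,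
        g i j k * (vy i j k - vy i (j-1) k)
      = ∑ i ∈ cellIdx N, ∑ k ∈ cellIdx N,
          (-∑ j ∈ faceIdx N, vy i j k * (nExt N g i (j+1) k - nExt N g i j k)) :=
        Finset.sum_congr rfl fun i hi => Finset.sum_congr rfl fun k hk => key i hi k hk
    _ = -∑ i ∈ cellIdx N, ∑ k ∈ cellIdx N, ∑ j ∈ faceIdx N,
          vy i j k * (nExt N g i (j+1) k - nExt N g i j k) := by
        simp [Finset.sum_neg_distrib]
    _ = -∑ i ∈ cellIdx N, ∑ j ∈ faceIdx N, ∑ k ∈ cellIdx N,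
          vy i j k * (nExt N g i (j+1) k - nExt N g i j k) := by
        rw [sum_rot_j (A := cellIdx N) (B := faceIdx N) (C := cellIdx N)]

lemma divz3 (N : ℕ) (hN : 0 < N) (g vz : ℤ → ℤ → ℤ → ℝ)
    (hbc : ∀ i ∈ cellIdx N, ∀ j ∈ cellIdx N, vz i j 0 = 0 ∧ vz i j (N:ℤ) = 0) :
    ∑ i ∈ cellIdx N, ∑ j ∈ cellIdx N, ∑ k ∈ cellIdx N,
      g i j k * (vz i j k - vz i j (k-1)) =
    -∑ i ∈ cellIdx N, ∑ j ∈ cellIdx N, ∑ k ∈ faceIdx N,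
      vz i j k * (nExt N g i j (k+1) - nExt N g i j k) := by
  have key : ∀ i ∈ cellIdx N, ∀ j ∈ cellIdx N,
      ∑ k ∈ cellIdx N, g i j k * (vz i j k - vz i j (k-1)) =
      -∑ k ∈ faceIdx N, vz i j k * (nExt N g i j (k+1) - nExt N g i j k) := by
    intro i hi j hj
    rw [show cellIdx N = Icc (1:ℤ) (N:ℤ) from rfl,
        show faceIdx N = Icc (1:ℤ) ((N:ℤ)-1) from rfl,
        div_sbp1d N hN (fun t => vz i j t) (fun t => g i j t) (hbc i hi j hj).1
          (hbc i hi j hj).2]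
    congr 1
    apply Finset.sum_congr rfl
    intro k hk
    have hk1 : k ∈ cellIdx N := face_mem_cell (N := N) (by exact hk)
    have hk2 : k + 1 ∈ cellIdx N := face_succ_mem_cell (N := N) (by exact hk)
    rw [nExt_cell g hi hj hk2, nExt_cell g hi hj hk1]
  calc ∑ i ∈ cellIdx N, ∑ j ∈ cellIdx N, ∑ k ∈ cellIdx N,
        g i j k * (vz i j k - vz i j (k-1))
      = ∑ i ∈ cellIdx N, ∑ j ∈ cellIdx N,
          (-∑ k ∈ faceIdx N, vz i j k * (nExt N g i j (k+1) - nExt N g i j k)) :=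
        Finset.sum_congr rfl fun i hi => Finset.sum_congr rfl fun j hj => key i hi j hj
    _ = -∑ i ∈ cellIdx N, ∑ j ∈ cellIdx N, ∑ k ∈ faceIdx N,
          vz i j k * (nExt N g i j (k+1) - nExt N g i j k) := by
        simp [Finset.sum_neg_distrib]

/-- 3D divergence summation by parts. -/
lemma div_sbp3 (N : ℕ) (hN : 0 < N) (h : ℝ) (g vx vy vz : ℤ → ℤ → ℤ → ℝ)
    (hbx : ∀ j ∈ cellIdx N, ∀ k ∈ cellIdx N, vx 0 j k = 0 ∧ vx (N:ℤ) j k = 0)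
    (hby : ∀ i ∈ cellIdx N, ∀ k ∈ cellIdx N, vy i 0 k = 0 ∧ vy i (N:ℤ) k = 0)
    (hbz : ∀ i ∈ cellIdx N, ∀ j ∈ cellIdx N, vz i j 0 = 0 ∧ vz i j (N:ℤ) = 0) :
    cip N h g (divH h vx vy vz) =
      -(h^3) * ((∑ i ∈ faceIdx N, ∑ j ∈ cellIdx N, ∑ k ∈ cellIdx N,
          vx i j k * Dx N h g i j k) +
        (∑ i ∈ cellIdx N, ∑ j ∈ faceIdx N, ∑ k ∈ cellIdx N,
          vy i j k * Dy N h g i j k) +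
        (∑ i ∈ cellIdx N, ∑ j ∈ cellIdx N, ∑ k ∈ faceIdx N,
          vz i j k * Dz N h g i j k)) := by
  have hpt : ∀ i ∈ cellIdx N, ∀ j ∈ cellIdx N, ∀ k ∈ cellIdx N,
      g i j k * divH h vx vy vz i j k =
      (g i j k * (vx i j k - vx (i-1) j k) + g i j k * (vy i j k - vy i (j-1) k) +
        g i j k * (vz i j k - vz i j (k-1))) / h := by
    intro i _ j _ k _; unfold divH; ring
  have e0 : ∑ i ∈ cellIdx N, ∑ j ∈ cellIdx N, ∑ k ∈ cellIdx N,
        g i j k * divH h vx vy vz i j k =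
      ((∑ i ∈ cellIdx N, ∑ j ∈ cellIdx N, ∑ k ∈ cellIdx N,
          g i j k * (vx i j k - vx (i-1) j k)) +
        (∑ i ∈ cellIdx N, ∑ j ∈ cellIdx N, ∑ k ∈ cellIdx N,
          g i j k * (vy i j k - vy i (j-1) k)) +
        (∑ i ∈ cellIdx N, ∑ j ∈ cellIdx N, ∑ k ∈ cellIdx N,
          g i j k * (vz i j k - vz i j (k-1)))) / h := by
    rw [sum3_congr hpt, sum3_div, sum3_add, sum3_add]
  have dx : ∑ i ∈ faceIdx N, ∑ j ∈ cellIdx N, ∑ k ∈ cellIdx N,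
        vx i j k * Dx N h g i j k =
      (∑ i ∈ faceIdx N, ∑ j ∈ cellIdx N, ∑ k ∈ cellIdx N,
        vx i j k * (nExt N g (i+1) j k - nExt N g i j k)) / h := by
    rw [← sum3_div]
    exact sum3_congr fun i _ j _ k _ => by unfold Dx; rw [mul_div_assoc]
  have dy : ∑ i ∈ cellIdx N, ∑ j ∈ faceIdx N, ∑ k ∈ cellIdx N,
        vy i j k * Dy N h g i j k =
      (∑ i ∈ cellIdx N, ∑ j ∈ faceIdx N, ∑ k ∈ cellIdx N,
        vy i j k * (nExt N g i (j+1) k - nExt N g i j k)) / h := by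
    rw [← sum3_div]
    exact sum3_congr fun i _ j _ k _ => by unfold Dy; rw [mul_div_assoc]
  have dz : ∑ i ∈ cellIdx N, ∑ j ∈ cellIdx N, ∑ k ∈ faceIdx N,
        vz i j k * Dz N h g i j k =
      (∑ i ∈ cellIdx N, ∑ j ∈ cellIdx N, ∑ k ∈ faceIdx N,
        vz i j k * (nExt N g i j (k+1) - nExt N g i j k)) / h := by
    rw [← sum3_div]
    exact sum3_congr fun i _ j _ k _ => by unfold Dz; rw [mul_div_assoc]
  simp only [cip]
  rw [e0, divx3 N hN g vx hbx, divy3 N hN g vy hby, divz3 N hN g vz hbz, dx, dy, dz]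
  ring

end Aux4
section Aux5

lemma ipFX_red (N : ℕ) (hN : 0 < N) (h : ℝ) (f g : ℤ → ℤ → ℤ → ℝ)
    (hbc : ∀ j ∈ cellIdx N, ∀ k ∈ cellIdx N,
      f 0 j k * g 0 j k = 0 ∧ f (N:ℤ) j k * g (N:ℤ) j k = 0) :
    ipFX N h f g =
      h^3 * ∑ i ∈ faceIdx N, ∑ j ∈ cellIdx N, ∑ k ∈ cellIdx N, f i j k * g i j k := by
  unfold ipFX
  have key : ∀ j ∈ cellIdx N, ∀ k ∈ cellIdx N,
      (1/2 : ℝ) * ∑ i ∈ cellIdx N, (f i j k * g i j k + f (i-1) j k * g (i-1) j k) =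
      ∑ i ∈ faceIdx N, f i j k * g i j k := by
    intro j hj k hk
    rw [show cellIdx N = Icc (1:ℤ) (N:ℤ) from rfl,
        show faceIdx N = Icc (1:ℤ) ((N:ℤ)-1) from rfl]
    exact face_red1d N hN (fun t => f t j k * g t j k) (hbc j hj k hk).1
      (hbc j hj k hk).2
  have e2 : (1/2 : ℝ) * ∑ j ∈ cellIdx N, ∑ k ∈ cellIdx N, ∑ i ∈ cellIdx N,
        (f i j k * g i j k + f (i-1) j k * g (i-1) j k) =
      ∑ j ∈ cellIdx N, ∑ k ∈ cellIdx N, ∑ i ∈ faceIdx N, f i j k * g i j k := by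
    rw [Finset.mul_sum]
    apply Finset.sum_congr rfl
    intro j hj
    rw [Finset.mul_sum]
    exact Finset.sum_congr rfl fun k hk => key j hj k hk
  calc h^3/2 * ∑ i ∈ cellIdx N, ∑ j ∈ cellIdx N, ∑ k ∈ cellIdx N,
        (f i j k * g i j k + f (i-1) j k * g (i-1) j k)
      = h^3/2 * ∑ j ∈ cellIdx N, ∑ k ∈ cellIdx N, ∑ i ∈ cellIdx N,
        (f i j k * g i j k + f (i-1) j k * g (i-1) j k) := by rw [sum_rot_i]
    _ = h^3 * ((1/2 : ℝ) * ∑ j ∈ cellIdx N, ∑ k ∈ cellIdx N, ∑ i ∈ cellIdx N,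
        (f i j k * g i j k + f (i-1) j k * g (i-1) j k)) := by ring
    _ = h^3 * ∑ j ∈ cellIdx N, ∑ k ∈ cellIdx N, ∑ i ∈ faceIdx N,
        f i j k * g i j k := by rw [e2]
    _ = h^3 * ∑ i ∈ faceIdx N, ∑ j ∈ cellIdx N, ∑ k ∈ cellIdx N,
        f i j k * g i j k := by
        rw [← sum_rot_i (A := faceIdx N) (B := cellIdx N) (C := cellIdx N)]

lemma ipFY_red (N : ℕ) (hN : 0 < N) (h : ℝ) (f g : ℤ → ℤ → ℤ → ℝ)
    (hbc : ∀ i ∈ cellIdx N, ∀ k ∈ cellIdx N,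
      f i 0 k * g i 0 k = 0 ∧ f i (N:ℤ) k * g i (N:ℤ) k = 0) :
    ipFY N h f g =
      h^3 * ∑ i ∈ cellIdx N, ∑ j ∈ faceIdx N, ∑ k ∈ cellIdx N, f i j k * g i j k := by
  unfold ipFY
  have key : ∀ i ∈ cellIdx N, ∀ k ∈ cellIdx N,
      (1/2 : ℝ) * ∑ j ∈ cellIdx N, (f i j k * g i j k + f i (j-1) k * g i (j-1) k) =
      ∑ j ∈ faceIdx N, f i j k * g i j k := by
    intro i hi k hk
    rw [show cellIdx N = Icc (1:ℤ) (N:ℤ) from rfl,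
        show faceIdx N = Icc (1:ℤ) ((N:ℤ)-1) from rfl]
    exact face_red1d N hN (fun t => f i t k * g i t k) (hbc i hi k hk).1
      (hbc i hi k hk).2
  have e2 : (1/2 : ℝ) * ∑ i ∈ cellIdx N, ∑ k ∈ cellIdx N, ∑ j ∈ cellIdx N,
        (f i j k * g i j k + f i (j-1) k * g i (j-1) k) =
      ∑ i ∈ cellIdx N, ∑ k ∈ cellIdx N, ∑ j ∈ faceIdx N, f i j k * g i j k := by
    rw [Finset.mul_sum]
    apply Finset.sum_congr rfl
    intro i hi
    rw [Finset.mul_sum]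
    exact Finset.sum_congr rfl fun k hk => key i hi k hk
  calc h^3/2 * ∑ i ∈ cellIdx N, ∑ j ∈ cellIdx N, ∑ k ∈ cellIdx N,
        (f i j k * g i j k + f i (j-1) k * g i (j-1) k)
      = h^3/2 * ∑ i ∈ cellIdx N, ∑ k ∈ cellIdx N, ∑ j ∈ cellIdx N,
        (f i j k * g i j k + f i (j-1) k * g i (j-1) k) := by rw [sum_rot_j]
    _ = h^3 * ((1/2 : ℝ) * ∑ i ∈ cellIdx N, ∑ k ∈ cellIdx N, ∑ j ∈ cellIdx N,
        (f i j k * g i j k + f i (j-1) k * g i (j-1) k)) := by ring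
    _ = h^3 * ∑ i ∈ cellIdx N, ∑ k ∈ cellIdx N, ∑ j ∈ faceIdx N,
        f i j k * g i j k := by rw [e2]
    _ = h^3 * ∑ i ∈ cellIdx N, ∑ j ∈ faceIdx N, ∑ k ∈ cellIdx N,
        f i j k * g i j k := by
        rw [← sum_rot_j (A := cellIdx N) (B := faceIdx N) (C := cellIdx N)]

lemma ipFZ_red (N : ℕ) (hN : 0 < N) (h : ℝ) (f g : ℤ → ℤ → ℤ → ℝ)
    (hbc : ∀ i ∈ cellIdx N, ∀ j ∈ cellIdx N,
      f i j 0 * g i j 0 = 0 ∧ f i j (N:ℤ) * g i j (N:ℤ) = 0) :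
    ipFZ N h f g =
      h^3 * ∑ i ∈ cellIdx N, ∑ j ∈ cellIdx N, ∑ k ∈ faceIdx N, f i j k * g i j k := by
  unfold ipFZ
  have key : ∀ i ∈ cellIdx N, ∀ j ∈ cellIdx N,
      (1/2 : ℝ) * ∑ k ∈ cellIdx N, (f i j k * g i j k + f i j (k-1) * g i j (k-1)) =
      ∑ k ∈ faceIdx N, f i j k * g i j k := by
    intro i hi j hj
    rw [show cellIdx N = Icc (1:ℤ) (N:ℤ) from rfl,
        show faceIdx N = Icc (1:ℤ) ((N:ℤ)-1) from rfl]
    exact face_red1d N hN (fun t => f i j t * g i j t) (hbc i hi j hj).1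
      (hbc i hi j hj).2
  have e2 : (1/2 : ℝ) * ∑ i ∈ cellIdx N, ∑ j ∈ cellIdx N, ∑ k ∈ cellIdx N,
        (f i j k * g i j k + f i j (k-1) * g i j (k-1)) =
      ∑ i ∈ cellIdx N, ∑ j ∈ cellIdx N, ∑ k ∈ faceIdx N, f i j k * g i j k := by
    rw [Finset.mul_sum]
    apply Finset.sum_congr rfl
    intro i hi
    rw [Finset.mul_sum]
    exact Finset.sum_congr rfl fun j hj => key i hi j hj
  calc h^3/2 * ∑ i ∈ cellIdx N, ∑ j ∈ cellIdx N, ∑ k ∈ cellIdx N,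
        (f i j k * g i j k + f i j (k-1) * g i j (k-1))
      = h^3 * ((1/2 : ℝ) * ∑ i ∈ cellIdx N, ∑ j ∈ cellIdx N, ∑ k ∈ cellIdx N,
        (f i j k * g i j k + f i j (k-1) * g i j (k-1))) := by ring
    _ = h^3 * ∑ i ∈ cellIdx N, ∑ j ∈ cellIdx N, ∑ k ∈ faceIdx N,
        f i j k * g i j k := by rw [e2]

lemma abs_le_cInf (N : ℕ) (φ : ℤ → ℤ → ℤ → ℝ) {i j k : ℤ}
    (hi : i ∈ cellIdx N) (hj : j ∈ cellIdx N) (hk : k ∈ cellIdx N) :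
    |φ i j k| ≤ cInf N φ := by
  unfold cInf
  apply le_csSup
  · apply Set.Finite.bddAbove
    have hsub : {r : ℝ | ∃ i ∈ cellIdx N, ∃ j ∈ cellIdx N, ∃ k ∈ cellIdx N,
        r = |φ i j k|} ⊆
        (fun t : ℤ × ℤ × ℤ => |φ t.1 t.2.1 t.2.2|) ''
          ((cellIdx N ×ˢ cellIdx N ×ˢ cellIdx N : Finset (ℤ × ℤ × ℤ)) :
            Set (ℤ × ℤ × ℤ)) := by
      rintro r ⟨i, hi, j, hj, k, hk, rfl⟩
      exact ⟨(i, j, k), by simp [Finset.mem_product, hi, hj, hk], rfl⟩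
    exact Set.Finite.subset (Set.Finite.image _ (Finset.finite_toSet _)) hsub
  · exact ⟨i, hi, j, hj, k, hk, rfl⟩

end Aux5

/-- unconditional energy stability: for any solution of the
scheme with `‖φⁿ‖_∞ < 1`,
`F_h(φ^{n+1}) - F_h(φⁿ) ≤ -(ε²/2)‖∇_h(φ^{n+1}-φⁿ)‖₂² - s‖∇_h μ^{n+1}‖₂²
 - (s/γ)(‖u^{n+1}‖₂² + (-Δ_h u^{n+1}, u^{n+1}))`. -/
theorem scheme_energy_stable (L : ℝ) (hL : 0 < L) (N : ℕ) (hN : 0 < N)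
    (s ε θ γ : ℝ) (hs : 0 < s) (hε : 0 < ε) (hθ : 0 < θ) (hγ : 0 < γ)
    (φn φ μ p ux uy uz : ℤ → ℤ → ℤ → ℝ) (hφn : cInf N φn < 1)
    (hsol : SchemeSol N (L / N) s ε θ γ φn φ μ p ux uy uz) :
    Fh N (L / N) ε θ φ - Fh N (L / N) ε θ φn ≤
      -(ε ^ 2 / 2) * gradSq N (L / N) (fun a b c => φ a b c - φn a b c) -
        s * gradSq N (L / N) μ -
        s / γ * (macIP N (L / N) ux uy uz ux uy uz +
          macIP N (L / N) (fun a b c => -lapFX N (L / N) ux a b c)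
            (fun a b c => -lapFY N (L / N) uy a b c)
            (fun a b c => -lapFZ N (L / N) uz a b c) ux uy uz) := by
  obtain ⟨hnp, hφinf, heq1, heq2, heq3, hmx, hmy, hmz⟩ := hsol
  obtain ⟨hnpx, hnpy, hnpz⟩ := hnp
  set h : ℝ := L / N with hhdef
  have hpos : 0 < h := div_pos hL (by exact_mod_cast hN)
  have h3pos : 0 < h ^ 3 := by positivity
  have h3ne : (h:ℝ) ^ 3 ≠ 0 := ne_of_gt h3pos
  -- pointwise bounds
  have hb1 : ∀ i ∈ cellIdx N, ∀ j ∈ cellIdx N, ∀ k ∈ cellIdx N, |φ i j k| < 1 :=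
    fun i hi j hj k hk => lt_of_le_of_lt (abs_le_cInf N φ hi hj hk) hφinf
  have hb2 : ∀ i ∈ cellIdx N, ∀ j ∈ cellIdx N, ∀ k ∈ cellIdx N, |φn i j k| < 1 :=
    fun i hi j hj k hk => lt_of_le_of_lt (abs_le_cInf N φn hi hj hk) hφn
  -- Step A : pointwise convexity
  have hA1 : (∑ i ∈ cellIdx N, ∑ j ∈ cellIdx N, ∑ k ∈ cellIdx N,
        ((1 + φ i j k) * Real.log (1 + φ i j k) +
          (1 - φ i j k) * Real.log (1 - φ i j k) - θ / 2 * φ i j k ^ 2)) -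
      (∑ i ∈ cellIdx N, ∑ j ∈ cellIdx N, ∑ k ∈ cellIdx N,
        ((1 + φn i j k) * Real.log (1 + φn i j k) +
          (1 - φn i j k) * Real.log (1 - φn i j k) - θ / 2 * φn i j k ^ 2)) ≤
      ∑ i ∈ cellIdx N, ∑ j ∈ cellIdx N, ∑ k ∈ cellIdx N,
        (Real.log (1 + φ i j k) - Real.log (1 - φ i j k) - θ * φn i j k) *
          (φ i j k - φn i j k) := by
    rw [← sum3_sub]
    exact sum3_le fun i hi j hj k hk =>
      convex_log_ineq θ hθ _ _ (hb1 i hi j hj k hk) (hb2 i hi j hj k hk)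
  have f1 := mul_le_mul_of_nonneg_left hA1 (le_of_lt h3pos)
  have f2' : ε ^ 2 / 2 * gradSq N h φ - ε ^ 2 / 2 * gradSq N h φn =
      ε ^ 2 * gradIP N h φ (fun a b c => φ a b c - φn a b c) -
        ε ^ 2 / 2 * gradSq N h (fun a b c => φ a b c - φn a b c) := by
    linear_combination (ε ^ 2 / 2) * grad_diff N h φ φn
  have f3' : ε ^ 2 * cip N h (fun a b c => φ a b c - φn a b c)
        (fun i j k => lapC N h φ i j k) =
      -(ε ^ 2 * gradIP N h φ (fun a b c => φ a b c - φn a b c)) := by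
    linear_combination ε ^ 2 * sbp_lap N hN h φ (fun a b c => φ a b c - φn a b c)
  have f4 : h ^ 3 * (∑ i ∈ cellIdx N, ∑ j ∈ cellIdx N, ∑ k ∈ cellIdx N,
        (Real.log (1 + φ i j k) - Real.log (1 - φ i j k) - θ * φn i j k) *
          (φ i j k - φn i j k)) -
      ε ^ 2 * cip N h (fun a b c => φ a b c - φn a b c)
        (fun i j k => lapC N h φ i j k) =
      cip N h μ (fun a b c => φ a b c - φn a b c) := by
    simp only [cip]
    have e : ∑ i ∈ cellIdx N, ∑ j ∈ cellIdx N, ∑ k ∈ cellIdx N,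
        μ i j k * (φ i j k - φn i j k) =
        ∑ i ∈ cellIdx N, ∑ j ∈ cellIdx N, ∑ k ∈ cellIdx N,
        ((Real.log (1 + φ i j k) - Real.log (1 - φ i j k) - θ * φn i j k) *
          (φ i j k - φn i j k) -
          ε ^ 2 * ((φ i j k - φn i j k) * lapC N h φ i j k)) :=
      sum3_congr fun i hi j hj k hk => by rw [heq2 i hi j hj k hk]; ring
    rw [e, sum3_sub, sum3_smul]
    ring
  -- Step B : substitute the phase equation
  have f5 : cip N h μ (fun a b c => φ a b c - φn a b c) =
      s * cip N h μ (fun i j k => lapC N h μ i j k) -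
        s * cip N h μ (divH h (fun a b c => AxF N φn a b c * ux a b c)
          (fun a b c => AyF N φn a b c * uy a b c)
          (fun a b c => AzF N φn a b c * uz a b c)) := by
    simp only [cip]
    have e : ∑ i ∈ cellIdx N, ∑ j ∈ cellIdx N, ∑ k ∈ cellIdx N,
        μ i j k * (φ i j k - φn i j k) =
        ∑ i ∈ cellIdx N, ∑ j ∈ cellIdx N, ∑ k ∈ cellIdx N,
        (s * (μ i j k * lapC N h μ i j k) -
          s * (μ i j k * divH h (fun a b c => AxF N φn a b c * ux a b c)
            (fun a b c => AyF N φn a b c * uy a b c)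
            (fun a b c => AzF N φn a b c * uz a b c) i j k)) :=
      sum3_congr fun i hi j hj k hk => by rw [heq1 i hi j hj k hk]; ring
    rw [e, sum3_sub, sum3_smul, sum3_smul]
    ring
  have f6' : s * cip N h μ (fun i j k => lapC N h μ i j k) =
      -(s * gradSq N h μ) := by
    have e1 := sbp_lap N hN h μ μ
    have e2 := gradIP_self N h μ
    linear_combination s * e1 - s * e2
  -- boundary conditions for the convective flux
  have hbx : ∀ j ∈ cellIdx N, ∀ k ∈ cellIdx N,
      AxF N φn 0 j k * ux 0 j k = 0 ∧ AxF N φn (N:ℤ) j k * ux (N:ℤ) j k = 0 :=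
    fun j hj k hk => ⟨by rw [(hnpx j hj k hk).1, mul_zero],
      by rw [(hnpx j hj k hk).2, mul_zero]⟩
  have hby : ∀ i ∈ cellIdx N, ∀ k ∈ cellIdx N,
      AyF N φn i 0 k * uy i 0 k = 0 ∧ AyF N φn i (N:ℤ) k * uy i (N:ℤ) k = 0 :=
    fun i hi k hk => ⟨by rw [(hnpy i hi k hk).1, mul_zero],
      by rw [(hnpy i hi k hk).2, mul_zero]⟩
  have hbz : ∀ i ∈ cellIdx N, ∀ j ∈ cellIdx N,
      AzF N φn i j 0 * uz i j 0 = 0 ∧ AzF N φn i j (N:ℤ) * uz i j (N:ℤ) = 0 :=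
    fun i hi j hj => ⟨by rw [(hnpz i hi j hj).1, mul_zero],
      by rw [(hnpz i hi j hj).2, mul_zero]⟩
  have f7 : cip N h μ (divH h (fun a b c => AxF N φn a b c * ux a b c)
          (fun a b c => AyF N φn a b c * uy a b c)
          (fun a b c => AzF N φn a b c * uz a b c)) =
      -(h ^ 3) * ((∑ i ∈ faceIdx N, ∑ j ∈ cellIdx N, ∑ k ∈ cellIdx N,
          AxF N φn i j k * ux i j k * Dx N h μ i j k) +
        (∑ i ∈ cellIdx N, ∑ j ∈ faceIdx N, ∑ k ∈ cellIdx N,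
          AyF N φn i j k * uy i j k * Dy N h μ i j k) +
        (∑ i ∈ cellIdx N, ∑ j ∈ cellIdx N, ∑ k ∈ faceIdx N,
          AzF N φn i j k * uz i j k * Dz N h μ i j k)) := by
    exact div_sbp3 N hN h μ _ _ _ hbx hby hbz
  have f7' := congrArg (fun t => s * t) f7
  -- Step C : momentum equation tested with u
  have f8x : (∑ i ∈ faceIdx N, ∑ j ∈ cellIdx N, ∑ k ∈ cellIdx N,
        -lapFX N h ux i j k * ux i j k) +
      (∑ i ∈ faceIdx N, ∑ j ∈ cellIdx N, ∑ k ∈ cellIdx N, ux i j k * ux i j k) +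
      (∑ i ∈ faceIdx N, ∑ j ∈ cellIdx N, ∑ k ∈ cellIdx N,
        ux i j k * Dx N h p i j k) +
      γ * (∑ i ∈ faceIdx N, ∑ j ∈ cellIdx N, ∑ k ∈ cellIdx N,
        AxF N φn i j k * ux i j k * Dx N h μ i j k) = 0 := by
    rw [← sum3_smul, ← sum3_add, ← sum3_add, ← sum3_add]
    have e : ∑ i ∈ faceIdx N, ∑ j ∈ cellIdx N, ∑ k ∈ cellIdx N,
        (-lapFX N h ux i j k * ux i j k + ux i j k * ux i j k +
          ux i j k * Dx N h p i j k +
          γ * (AxF N φn i j k * ux i j k * Dx N h μ i j k)) =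
        ∑ i ∈ faceIdx N, ∑ j ∈ cellIdx N, ∑ k ∈ cellIdx N, (0:ℝ) :=
      sum3_congr fun i hi j hj k hk => by
        have := hmx i hi j hj k hk
        linear_combination ux i j k * this
    rw [e]; simp
  have f8y : (∑ i ∈ cellIdx N, ∑ j ∈ faceIdx N, ∑ k ∈ cellIdx N,
        -lapFY N h uy i j k * uy i j k) +
      (∑ i ∈ cellIdx N, ∑ j ∈ faceIdx N, ∑ k ∈ cellIdx N, uy i j k * uy i j k) +
      (∑ i ∈ cellIdx N, ∑ j ∈ faceIdx N, ∑ k ∈ cellIdx N,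
        uy i j k * Dy N h p i j k) +
      γ * (∑ i ∈ cellIdx N, ∑ j ∈ faceIdx N, ∑ k ∈ cellIdx N,
        AyF N φn i j k * uy i j k * Dy N h μ i j k) = 0 := by
    rw [← sum3_smul, ← sum3_add, ← sum3_add, ← sum3_add]
    have e : ∑ i ∈ cellIdx N, ∑ j ∈ faceIdx N, ∑ k ∈ cellIdx N,
        (-lapFY N h uy i j k * uy i j k + uy i j k * uy i j k +
          uy i j k * Dy N h p i j k +
          γ * (AyF N φn i j k * uy i j k * Dy N h μ i j k)) =
        ∑ i ∈ cellIdx N, ∑ j ∈ faceIdx N, ∑ k ∈ cellIdx N, (0:ℝ) :=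
      sum3_congr fun i hi j hj k hk => by
        have := hmy i hi j hj k hk
        linear_combination uy i j k * this
    rw [e]; simp
  have f8z : (∑ i ∈ cellIdx N, ∑ j ∈ cellIdx N, ∑ k ∈ faceIdx N,
        -lapFZ N h uz i j k * uz i j k) +
      (∑ i ∈ cellIdx N, ∑ j ∈ cellIdx N, ∑ k ∈ faceIdx N, uz i j k * uz i j k) +
      (∑ i ∈ cellIdx N, ∑ j ∈ cellIdx N, ∑ k ∈ faceIdx N,
        uz i j k * Dz N h p i j k) +
      γ * (∑ i ∈ cellIdx N, ∑ j ∈ cellIdx N, ∑ k ∈ faceIdx N,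
        AzF N φn i j k * uz i j k * Dz N h μ i j k) = 0 := by
    rw [← sum3_smul, ← sum3_add, ← sum3_add, ← sum3_add]
    have e : ∑ i ∈ cellIdx N, ∑ j ∈ cellIdx N, ∑ k ∈ faceIdx N,
        (-lapFZ N h uz i j k * uz i j k + uz i j k * uz i j k +
          uz i j k * Dz N h p i j k +
          γ * (AzF N φn i j k * uz i j k * Dz N h μ i j k)) =
        ∑ i ∈ cellIdx N, ∑ j ∈ cellIdx N, ∑ k ∈ faceIdx N, (0:ℝ) :=
      sum3_congr fun i hi j hj k hk => by
        have := hmz i hi j hj k hk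
        linear_combination uz i j k * this
    rw [e]; simp
  -- pressure contribution vanishes
  have f9a : cip N h p (divH h ux uy uz) = 0 := by
    simp only [cip]
    have e : ∑ i ∈ cellIdx N, ∑ j ∈ cellIdx N, ∑ k ∈ cellIdx N,
        p i j k * divH h ux uy uz i j k =
        ∑ i ∈ cellIdx N, ∑ j ∈ cellIdx N, ∑ k ∈ cellIdx N, (0:ℝ) :=
      sum3_congr fun i hi j hj k hk => by rw [heq3 i hi j hj k hk, mul_zero]
    rw [e]; simp
  have f9b := div_sbp3 N hN h p ux uy uz hnpx hnpy hnpz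
  have f9' : (∑ i ∈ faceIdx N, ∑ j ∈ cellIdx N, ∑ k ∈ cellIdx N,
        ux i j k * Dx N h p i j k) +
      (∑ i ∈ cellIdx N, ∑ j ∈ faceIdx N, ∑ k ∈ cellIdx N,
        uy i j k * Dy N h p i j k) +
      (∑ i ∈ cellIdx N, ∑ j ∈ cellIdx N, ∑ k ∈ faceIdx N,
        uz i j k * Dz N h p i j k) = 0 := by
    have h0 := f9a.symm.trans f9b
    have h1 : h ^ 3 ≠ 0 := h3ne
    field_simp at h0
    exact (mul_eq_zero.mp (neg_eq_zero.mp h0.symm)).resolve_left h1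
  -- face reductions
  have hbux : ∀ j ∈ cellIdx N, ∀ k ∈ cellIdx N,
      ux 0 j k * ux 0 j k = 0 ∧ ux (N:ℤ) j k * ux (N:ℤ) j k = 0 :=
    fun j hj k hk => ⟨by rw [(hnpx j hj k hk).1, mul_zero],
      by rw [(hnpx j hj k hk).2, mul_zero]⟩
  have hbuy : ∀ i ∈ cellIdx N, ∀ k ∈ cellIdx N,
      uy i 0 k * uy i 0 k = 0 ∧ uy i (N:ℤ) k * uy i (N:ℤ) k = 0 :=
    fun i hi k hk => ⟨by rw [(hnpy i hi k hk).1, mul_zero],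
      by rw [(hnpy i hi k hk).2, mul_zero]⟩
  have hbuz : ∀ i ∈ cellIdx N, ∀ j ∈ cellIdx N,
      uz i j 0 * uz i j 0 = 0 ∧ uz i j (N:ℤ) * uz i j (N:ℤ) = 0 :=
    fun i hi j hj => ⟨by rw [(hnpz i hi j hj).1, mul_zero],
      by rw [(hnpz i hi j hj).2, mul_zero]⟩
  have f10 : macIP N h ux uy uz ux uy uz =
      h ^ 3 * ((∑ i ∈ faceIdx N, ∑ j ∈ cellIdx N, ∑ k ∈ cellIdx N,
          ux i j k * ux i j k) +
        (∑ i ∈ cellIdx N, ∑ j ∈ faceIdx N, ∑ k ∈ cellIdx N, uy i j k * uy i j k) +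
        (∑ i ∈ cellIdx N, ∑ j ∈ cellIdx N, ∑ k ∈ faceIdx N, uz i j k * uz i j k)) := by
    unfold macIP
    rw [ipFX_red N hN h ux ux hbux, ipFY_red N hN h uy uy hbuy,
      ipFZ_red N hN h uz uz hbuz]
    ring
  have hblx : ∀ j ∈ cellIdx N, ∀ k ∈ cellIdx N,
      (fun a b c => -lapFX N h ux a b c) 0 j k * ux 0 j k = 0 ∧
      (fun a b c => -lapFX N h ux a b c) (N:ℤ) j k * ux (N:ℤ) j k = 0 :=
    fun j hj k hk => ⟨by simp only []; rw [(hnpx j hj k hk).1, mul_zero],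
      by simp only []; rw [(hnpx j hj k hk).2, mul_zero]⟩
  have hbly : ∀ i ∈ cellIdx N, ∀ k ∈ cellIdx N,
      (fun a b c => -lapFY N h uy a b c) i 0 k * uy i 0 k = 0 ∧
      (fun a b c => -lapFY N h uy a b c) i (N:ℤ) k * uy i (N:ℤ) k = 0 :=
    fun i hi k hk => ⟨by simp only []; rw [(hnpy i hi k hk).1, mul_zero],
      by simp only []; rw [(hnpy i hi k hk).2, mul_zero]⟩
  have hblz : ∀ i ∈ cellIdx N, ∀ j ∈ cellIdx N,
      (fun a b c => -lapFZ N h uz a b c) i j 0 * uz i j 0 = 0 ∧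
      (fun a b c => -lapFZ N h uz a b c) i j (N:ℤ) * uz i j (N:ℤ) = 0 :=
    fun i hi j hj => ⟨by simp only []; rw [(hnpz i hi j hj).1, mul_zero],
      by simp only []; rw [(hnpz i hi j hj).2, mul_zero]⟩
  have f11 : macIP N h (fun a b c => -lapFX N h ux a b c)
        (fun a b c => -lapFY N h uy a b c)
        (fun a b c => -lapFZ N h uz a b c) ux uy uz =
      h ^ 3 * ((∑ i ∈ faceIdx N, ∑ j ∈ cellIdx N, ∑ k ∈ cellIdx N,
          -lapFX N h ux i j k * ux i j k) +
        (∑ i ∈ cellIdx N, ∑ j ∈ faceIdx N, ∑ k ∈ cellIdx N,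
          -lapFY N h uy i j k * uy i j k) +
        (∑ i ∈ cellIdx N, ∑ j ∈ cellIdx N, ∑ k ∈ faceIdx N,
          -lapFZ N h uz i j k * uz i j k)) := by
    unfold macIP
    rw [ipFX_red N hN h _ ux hblx, ipFY_red N hN h _ uy hbly,
      ipFZ_red N hN h _ uz hblz]
    ring
  -- key identity from the momentum equation
  have fkey : γ * (h ^ 3 * ((∑ i ∈ faceIdx N, ∑ j ∈ cellIdx N, ∑ k ∈ cellIdx N,
        AxF N φn i j k * ux i j k * Dx N h μ i j k) +
      (∑ i ∈ cellIdx N, ∑ j ∈ faceIdx N, ∑ k ∈ cellIdx N,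
        AyF N φn i j k * uy i j k * Dy N h μ i j k) +
      (∑ i ∈ cellIdx N, ∑ j ∈ cellIdx N, ∑ k ∈ faceIdx N,
        AzF N φn i j k * uz i j k * Dz N h μ i j k))) =
      -(macIP N h (fun a b c => -lapFX N h ux a b c)
          (fun a b c => -lapFY N h uy a b c)
          (fun a b c => -lapFZ N h uz a b c) ux uy uz +
        macIP N h ux uy uz ux uy uz) := by
    linear_combination h ^ 3 * f8x + h ^ 3 * f8y + h ^ 3 * f8z - h ^ 3 * f9' +
      f10 + f11
  have fkey2 : s * (h ^ 3 * ((∑ i ∈ faceIdx N, ∑ j ∈ cellIdx N, ∑ k ∈ cellIdx N,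
        AxF N φn i j k * ux i j k * Dx N h μ i j k) +
      (∑ i ∈ cellIdx N, ∑ j ∈ faceIdx N, ∑ k ∈ cellIdx N,
        AyF N φn i j k * uy i j k * Dy N h μ i j k) +
      (∑ i ∈ cellIdx N, ∑ j ∈ cellIdx N, ∑ k ∈ faceIdx N,
        AzF N φn i j k * uz i j k * Dz N h μ i j k))) =
      -(s / γ * (macIP N h ux uy uz ux uy uz +
        macIP N h (fun a b c => -lapFX N h ux a b c)
          (fun a b c => -lapFY N h uy a b c)
          (fun a b c => -lapFZ N h uz a b c) ux uy uz)) := by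
    have hγ' : γ ≠ 0 := ne_of_gt hγ
    rw [div_mul_eq_mul_div, neg_div', eq_div_iff hγ']
    linear_combination s * fkey
  -- final assembly
  unfold Fh
  linarith [f1, f2', f3', f4, f5, f6', f7', fkey2]
end
end

section
/- Let u and v be MAC vector fields on Omega=(0,L)^3, both satisfying the no-penetration and free-slip boundary conditions. Then the face-centered discrete Laplacian is symmetric and negative semidefinite with respect to the MAC inner product: (-Delta_h u, v) = (u, -Delta_h v), and (-Delta_h u, u) >= 0. -/
open Finset

noncomputable section

lemma sum_shift1 (a b : ℤ) (p : ℤ → ℝ) :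
    (∑ i ∈ Finset.Icc a b, p (i - 1)) = ∑ i ∈ Finset.Icc (a - 1) (b - 1), p i := by
  rw [show Finset.Icc (a-1) (b-1)
      = (Finset.Icc a b).map ⟨fun i => i - 1, fun x y hxy => by dsimp at hxy; omega⟩ from ?_,
    Finset.sum_map]
  · rfl
  · ext x
    simp only [Finset.mem_map, Finset.mem_Icc, Function.Embedding.coeFn_mk]
    constructor
    · rintro ⟨hx1, hx2⟩; exact ⟨x + 1, by omega, by show x + 1 - 1 = x; omega⟩
    · rintro ⟨y, hy, rfl⟩; show a - 1 ≤ y - 1 ∧ y - 1 ≤ b - 1; omega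

lemma Icc_split_top (a b : ℤ) (h : a ≤ b) :
    Finset.Icc a b = insert b (Finset.Icc a (b - 1)) := by
  ext x; simp only [Finset.mem_Icc, Finset.mem_insert]; omega

lemma Icc_split_bot (a b : ℤ) (h : a ≤ b) :
    Finset.Icc a b = insert a (Finset.Icc (a + 1) b) := by
  ext x; simp only [Finset.mem_Icc, Finset.mem_insert]; omega

lemma sum_split_top (a b : ℤ) (h : a ≤ b) (p : ℤ → ℝ) :
    (∑ i ∈ Finset.Icc a b, p i) = (∑ i ∈ Finset.Icc a (b-1), p i) + p b := by
  rw [Icc_split_top a b h, Finset.sum_insert (by simp)]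
  ring

lemma sum_split_bot (a b : ℤ) (h : a ≤ b) (p : ℤ → ℝ) :
    (∑ i ∈ Finset.Icc a b, p i) = p a + (∑ i ∈ Finset.Icc (a+1) b, p i) := by
  rw [Icc_split_bot a b h, Finset.sum_insert (by simp)]
-- clamp lemmas and 1D SBP
lemma clamp_eq (N : ℕ) {i : ℤ} (h : i ∈ cellIdx N) : clampIdx N i = i := by
  simp only [cellIdx, Finset.mem_Icc] at h
  simp only [clampIdx]; omega

lemma clamp_zero (N : ℕ) (hN : 0 < N) : clampIdx N 0 = 1 := by
  simp only [clampIdx]; omega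

lemma clamp_top (N : ℕ) (hN : 0 < N) : clampIdx N ((N : ℤ) + 1) = N := by
  simp only [clampIdx]; omega

lemma sbp_dirichlet (N : ℕ) (hN : 0 < N) (f g : ℤ → ℝ)
    (hf0 : f 0 = 0) (hfN : f (N : ℤ) = 0) (hg0 : g 0 = 0) (hgN : g (N : ℤ) = 0) :
    ∑ i ∈ Finset.Icc 1 ((N : ℤ) - 1), (f (i + 1) + f (i - 1) - 2 * f i) * g i
      = -∑ i ∈ Finset.Icc 0 ((N : ℤ) - 1), (f (i + 1) - f i) * (g (i + 1) - g i) := by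
  have e1 : ∑ i ∈ Finset.Icc 1 ((N : ℤ) - 1), (f (i + 1) + f (i - 1) - 2 * f i) * g i
      = (∑ i ∈ Finset.Icc 1 ((N : ℤ) - 1), (f (i + 1) - f i) * g i)
        - ∑ i ∈ Finset.Icc 1 ((N : ℤ) - 1), (f i - f (i - 1)) * g i := by
    rw [← Finset.sum_sub_distrib]; apply Finset.sum_congr rfl; intros; ring
  have e2 : ∑ i ∈ Finset.Icc 1 ((N : ℤ) - 1), (f i - f (i - 1)) * g i
      = ∑ i ∈ Finset.Icc 0 ((N : ℤ) - 2), (f (i + 1) - f i) * g (i + 1) := by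
    rw [show (0 : ℤ) = 1 - 1 by ring, show (N : ℤ) - 2 = (N - 1) - 1 by ring,
      ← sum_shift1]
    apply Finset.sum_congr rfl; intro i _
    have : i - 1 + 1 = i := by ring
    rw [this]
  have e3 : ∑ i ∈ Finset.Icc 0 ((N : ℤ) - 1), (f (i + 1) - f i) * g i
      = ∑ i ∈ Finset.Icc 1 ((N : ℤ) - 1), (f (i + 1) - f i) * g i := by
    rw [sum_split_bot 0 ((N : ℤ) - 1) (by omega), show (0 : ℤ) + 1 = 1 by ring, hg0]
    ring
  have e4 : ∑ i ∈ Finset.Icc 0 ((N : ℤ) - 1), (f (i + 1) - f i) * g (i + 1)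
      = ∑ i ∈ Finset.Icc 0 ((N : ℤ) - 2), (f (i + 1) - f i) * g (i + 1) := by
    rw [sum_split_top 0 ((N : ℤ) - 1) (by omega),
      show (N : ℤ) - 1 - 1 = (N : ℤ) - 2 by ring, show (N : ℤ) - 1 + 1 = (N : ℤ) by ring,
      hgN]
    ring
  have e5 : ∑ i ∈ Finset.Icc 0 ((N : ℤ) - 1), (f (i + 1) - f i) * (g (i + 1) - g i)
      = (∑ i ∈ Finset.Icc 0 ((N : ℤ) - 1), (f (i + 1) - f i) * g (i + 1))
        - ∑ i ∈ Finset.Icc 0 ((N : ℤ) - 1), (f (i + 1) - f i) * g i := by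
    rw [← Finset.sum_sub_distrib]; apply Finset.sum_congr rfl; intros; ring
  rw [e1, e2, e5, e3, e4]; ring

lemma sbp_neumann (N : ℕ) (hN : 0 < N) (f g : ℤ → ℝ) :
    ∑ j ∈ Finset.Icc 1 (N : ℤ),
        (f (clampIdx N (j + 1)) + f (clampIdx N (j - 1)) - 2 * f (clampIdx N j)) * g j
      = -∑ j ∈ Finset.Icc 1 ((N : ℤ) - 1), (f (j + 1) - f j) * (g (j + 1) - g j) := by
  set F : ℤ → ℝ := fun j => f (clampIdx N j) with hF
  have e1 : ∑ j ∈ Finset.Icc 1 (N : ℤ),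
        (f (clampIdx N (j + 1)) + f (clampIdx N (j - 1)) - 2 * f (clampIdx N j)) * g j
      = (∑ j ∈ Finset.Icc 1 (N : ℤ), (F (j + 1) - F j) * g j)
        - ∑ j ∈ Finset.Icc 1 (N : ℤ), (F j - F (j - 1)) * g j := by
    rw [← Finset.sum_sub_distrib]; apply Finset.sum_congr rfl; intros; simp only [hF]; ring
  have cl : ∀ m : ℤ, 1 ≤ m → m ≤ (N : ℤ) → clampIdx N m = m := by
    intro m h1 h2; simp only [clampIdx]; omega
  have eA : ∑ j ∈ Finset.Icc 1 (N : ℤ), (F (j + 1) - F j) * g j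
      = ∑ j ∈ Finset.Icc 1 ((N : ℤ) - 1), (f (j + 1) - f j) * g j := by
    rw [sum_split_top 1 (N : ℤ) (by omega)]
    have : F ((N : ℤ) + 1) - F (N : ℤ) = 0 := by
      simp only [hF, clamp_top N hN, cl (N : ℤ) (by omega) le_rfl, sub_self]
    rw [this, zero_mul, add_zero]
    apply Finset.sum_congr rfl; intro j hj
    simp only [Finset.mem_Icc] at hj
    rw [hF]; simp only []
    rw [cl (j + 1) (by omega) (by omega), cl j (by omega) (by omega)]
  have eB : ∑ j ∈ Finset.Icc 1 (N : ℤ), (F j - F (j - 1)) * g j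
      = ∑ j ∈ Finset.Icc 1 ((N : ℤ) - 1), (f (j + 1) - f j) * g (j + 1) := by
    rw [sum_split_bot 1 (N : ℤ) (by omega)]
    have : F 1 - F (1 - 1) = 0 := by
      norm_num [hF, clamp_zero N hN, cl 1 le_rfl (by omega)]
    rw [this, zero_mul, zero_add]
    rw [show (1 : ℤ) + 1 = 2 by ring]
    rw [show (∑ j ∈ Finset.Icc 2 (N : ℤ), (F j - F (j - 1)) * g j)
        = ∑ j ∈ Finset.Icc 2 (N : ℤ), (fun i => (F (i + 1) - F i) * g (i + 1)) (j - 1) from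
      Finset.sum_congr rfl (by intro j hj; simp only []; rw [show j - 1 + 1 = j by ring])]
    rw [sum_shift1 2 (N : ℤ) (fun i => (F (i + 1) - F i) * g (i + 1)),
      show (2 : ℤ) - 1 = 1 by ring]
    apply Finset.sum_congr rfl; intro j hj
    simp only [Finset.mem_Icc] at hj
    simp only [hF]
    rw [cl (j + 1) (by omega) (by omega), cl j (by omega) (by omega)]
  have e5 : ∑ j ∈ Finset.Icc 1 ((N : ℤ) - 1), (f (j + 1) - f j) * (g (j + 1) - g j)
      = (∑ j ∈ Finset.Icc 1 ((N : ℤ) - 1), (f (j + 1) - f j) * g (j + 1))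
        - ∑ j ∈ Finset.Icc 1 ((N : ℤ) - 1), (f (j + 1) - f j) * g j := by
    rw [← Finset.sum_sub_distrib]; apply Finset.sum_congr rfl; intros; ring
  rw [e1, eA, eB, e5]; ring
lemma sum_rot (s t r : Finset ℤ) (F : ℤ → ℤ → ℤ → ℝ) :
    ∑ i ∈ s, ∑ j ∈ t, ∑ k ∈ r, F i j k = ∑ j ∈ t, ∑ k ∈ r, ∑ i ∈ s, F i j k := by
  calc ∑ i ∈ s, ∑ j ∈ t, ∑ k ∈ r, F i j k
      = ∑ j ∈ t, ∑ i ∈ s, ∑ k ∈ r, F i j k := Finset.sum_comm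
    _ = ∑ j ∈ t, ∑ k ∈ r, ∑ i ∈ s, F i j k :=
        Finset.sum_congr rfl fun j _ => Finset.sum_comm

lemma sum_swap13 (s t r : Finset ℤ) (F : ℤ → ℤ → ℤ → ℝ) :
    ∑ i ∈ s, ∑ j ∈ t, ∑ k ∈ r, F i j k = ∑ k ∈ r, ∑ j ∈ t, ∑ i ∈ s, F i j k := by
  calc ∑ i ∈ s, ∑ j ∈ t, ∑ k ∈ r, F i j k
      = ∑ j ∈ t, ∑ i ∈ s, ∑ k ∈ r, F i j k := Finset.sum_comm
    _ = ∑ j ∈ t, ∑ k ∈ r, ∑ i ∈ s, F i j k :=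
        Finset.sum_congr rfl fun j _ => Finset.sum_comm
    _ = ∑ k ∈ r, ∑ j ∈ t, ∑ i ∈ s, F i j k := Finset.sum_comm

lemma sum3_congr_s12 (s t r : Finset ℤ) (F G : ℤ → ℤ → ℤ → ℝ)
    (hFG : ∀ i ∈ s, ∀ j ∈ t, ∀ k ∈ r, F i j k = G i j k) :
    ∑ i ∈ s, ∑ j ∈ t, ∑ k ∈ r, F i j k = ∑ i ∈ s, ∑ j ∈ t, ∑ k ∈ r, G i j k :=
  Finset.sum_congr rfl fun i hi => Finset.sum_congr rfl fun j hj =>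
    Finset.sum_congr rfl fun k hk => hFG i hi j hj k hk

/-- The symmetric bilinear form associated to the x-component Laplacian. -/
def bilinX (N : ℕ) (u v : ℤ → ℤ → ℤ → ℝ) : ℝ :=
  (∑ i ∈ Finset.Icc 0 ((N : ℤ) - 1), ∑ j ∈ cellIdx N, ∑ k ∈ cellIdx N,
      (u (i + 1) j k - u i j k) * (v (i + 1) j k - v i j k)) +
  (∑ i ∈ faceIdx N, ∑ j ∈ faceIdx N, ∑ k ∈ cellIdx N,
      (u i (j + 1) k - u i j k) * (v i (j + 1) k - v i j k)) +
  (∑ i ∈ faceIdx N, ∑ j ∈ cellIdx N, ∑ k ∈ faceIdx N,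
      (u i j (k + 1) - u i j k) * (v i j (k + 1) - v i j k))

lemma bilinX_comm (N : ℕ) (u v : ℤ → ℤ → ℤ → ℝ) : bilinX N u v = bilinX N v u := by
  unfold bilinX
  rw [sum3_congr_s12 _ _ _ _ (fun i j k => (v (i + 1) j k - v i j k) * (u (i + 1) j k - u i j k))
      (fun i _ j _ k _ => mul_comm _ _),
    sum3_congr_s12 _ _ _ _ (fun i j k => (v i (j + 1) k - v i j k) * (u i (j + 1) k - u i j k))
      (fun i _ j _ k _ => mul_comm _ _),
    sum3_congr_s12 _ _ _ _ (fun i j k => (v i j (k + 1) - v i j k) * (u i j (k + 1) - u i j k))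
      (fun i _ j _ k _ => mul_comm _ _)]

lemma bilinX_nonneg (N : ℕ) (u : ℤ → ℤ → ℤ → ℝ) : 0 ≤ bilinX N u u := by
  unfold bilinX
  have H : ∀ (s t r : Finset ℤ) (a : ℤ → ℤ → ℤ → ℝ),
      0 ≤ ∑ i ∈ s, ∑ j ∈ t, ∑ k ∈ r, a i j k * a i j k :=
    fun s t r a => Finset.sum_nonneg fun i _ => Finset.sum_nonneg fun j _ =>
      Finset.sum_nonneg fun k _ => mul_self_nonneg _
  exact add_nonneg (add_nonneg (H _ _ _ _) (H _ _ _ _)) (H _ _ _ _)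

lemma ipFX_comm (N : ℕ) (h : ℝ) (f g : ℤ → ℤ → ℤ → ℝ) :
    ipFX N h f g = ipFX N h g f := by
  unfold ipFX
  congr 1
  exact sum3_congr_s12 _ _ _ _ _ (fun i _ j _ k _ => by ring)

lemma ipFX_reduce (N : ℕ) (hN : 0 < N) (h : ℝ) (f g : ℤ → ℤ → ℤ → ℝ)
    (hbd : ∀ j ∈ cellIdx N, ∀ k ∈ cellIdx N,
      f 0 j k * g 0 j k = 0 ∧ f (N : ℤ) j k * g (N : ℤ) j k = 0) :
    ipFX N h f g
      = h ^ 3 * ∑ i ∈ faceIdx N, ∑ j ∈ cellIdx N, ∑ k ∈ cellIdx N, f i j k * g i j k := by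
  unfold ipFX
  set P : ℤ → ℝ := fun i => ∑ j ∈ cellIdx N, ∑ k ∈ cellIdx N, f i j k * g i j k with hP
  have inner : ∀ i : ℤ,
      (∑ j ∈ cellIdx N, ∑ k ∈ cellIdx N,
        (f i j k * g i j k + f (i - 1) j k * g (i - 1) j k)) = P i + P (i - 1) := by
    intro i
    simp only [hP, Finset.sum_add_distrib]
  rw [Finset.sum_congr rfl (fun i _ => inner i)]
  have split : (∑ i ∈ Finset.Icc 1 (N : ℤ), (P i + P (i - 1)))
      = (∑ i ∈ Finset.Icc 1 (N : ℤ), P i) + ∑ i ∈ Finset.Icc 0 ((N : ℤ) - 1), P i := by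
    rw [Finset.sum_add_distrib, sum_shift1]
    norm_num
  have hP0 : P 0 = 0 := by
    apply Finset.sum_eq_zero; intro j hj
    apply Finset.sum_eq_zero; intro k hk
    exact (hbd j hj k hk).1
  have hPN : P (N : ℤ) = 0 := by
    apply Finset.sum_eq_zero; intro j hj
    apply Finset.sum_eq_zero; intro k hk
    exact (hbd j hj k hk).2
  have e1 : (∑ i ∈ Finset.Icc 1 (N : ℤ), P i)
      = (∑ i ∈ Finset.Icc 1 ((N : ℤ) - 1), P i) := by
    rw [sum_split_top 1 (N : ℤ) (by omega), hPN, add_zero]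
  have e2 : (∑ i ∈ Finset.Icc 0 ((N : ℤ) - 1), P i)
      = (∑ i ∈ Finset.Icc 1 ((N : ℤ) - 1), P i) := by
    rw [sum_split_bot 0 ((N : ℤ) - 1) (by omega), hP0, zero_add]
    norm_num
  have : (∑ i ∈ cellIdx N, (P i + P (i - 1)))
      = 2 * ∑ i ∈ faceIdx N, P i := by
    show (∑ i ∈ Finset.Icc 1 (N : ℤ), (P i + P (i - 1))) = _
    rw [split, e1, e2]; unfold faceIdx; ring
  rw [this]; ring

/-- Core identity for the x-component. -/
lemma compX (N : ℕ) (hN : 0 < N) (h : ℝ) (hh : h ≠ 0) (u v : ℤ → ℤ → ℤ → ℝ)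
    (hu : ∀ j ∈ cellIdx N, ∀ k ∈ cellIdx N, u 0 j k = 0 ∧ u (N : ℤ) j k = 0)
    (hv : ∀ j ∈ cellIdx N, ∀ k ∈ cellIdx N, v 0 j k = 0 ∧ v (N : ℤ) j k = 0) :
    ipFX N h (fun a b c => -lapFX N h u a b c) v = h * bilinX N u v := by
  rw [ipFX_reduce N hN h _ v (fun j hj k hk =>
    ⟨by rw [(hv j hj k hk).1, mul_zero], by rw [(hv j hj k hk).2, mul_zero]⟩)]
  have main : (∑ i ∈ faceIdx N, ∑ j ∈ cellIdx N, ∑ k ∈ cellIdx N,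
        (fun a b c => -lapFX N h u a b c) i j k * v i j k)
      = (1 / h ^ 2) * bilinX N u v := by
    have expand : ∀ i ∈ faceIdx N, ∀ j ∈ cellIdx N, ∀ k ∈ cellIdx N,
        (fun a b c => -lapFX N h u a b c) i j k * v i j k
        = (-(1 / h ^ 2)) *
            ((u (i + 1) j k + u (i - 1) j k - 2 * u i j k) * v i j k
            + ((u i (clampIdx N (j + 1)) k + u i (clampIdx N (j - 1)) k
                - 2 * u i (clampIdx N j) k) * v i j k
            + (u i j (clampIdx N (k + 1)) + u i j (clampIdx N (k - 1))
                - 2 * u i j (clampIdx N k)) * v i j k)) := by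
      intro i hi j hj k hk
      simp only [lapFX, fExtX, clamp_eq N hj, clamp_eq N hk]
      ring
    rw [sum3_congr_s12 _ _ _ _ _ expand]
    simp only [mul_add, Finset.sum_add_distrib, ← Finset.mul_sum]
    have h1 : (∑ i ∈ faceIdx N, ∑ j ∈ cellIdx N, ∑ k ∈ cellIdx N,
          (u (i + 1) j k + u (i - 1) j k - 2 * u i j k) * v i j k)
        = -(∑ i ∈ Finset.Icc 0 ((N : ℤ) - 1), ∑ j ∈ cellIdx N, ∑ k ∈ cellIdx N,
            (u (i + 1) j k - u i j k) * (v (i + 1) j k - v i j k)) := by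
      rw [sum_rot (faceIdx N) (cellIdx N) (cellIdx N),
        sum_rot (Finset.Icc 0 ((N : ℤ) - 1)) (cellIdx N) (cellIdx N)]
      rw [← Finset.sum_neg_distrib]
      apply Finset.sum_congr rfl; intro j hj
      rw [← Finset.sum_neg_distrib]
      apply Finset.sum_congr rfl; intro k hk
      exact sbp_dirichlet N hN (fun i => u i j k) (fun i => v i j k)
        (hu j hj k hk).1 (hu j hj k hk).2 (hv j hj k hk).1 (hv j hj k hk).2
    have h2 : (∑ i ∈ faceIdx N, ∑ j ∈ cellIdx N, ∑ k ∈ cellIdx N,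
          (u i (clampIdx N (j + 1)) k + u i (clampIdx N (j - 1)) k
            - 2 * u i (clampIdx N j) k) * v i j k)
        = -(∑ i ∈ faceIdx N, ∑ j ∈ faceIdx N, ∑ k ∈ cellIdx N,
            (u i (j + 1) k - u i j k) * (v i (j + 1) k - v i j k)) := by
      rw [show (∑ i ∈ faceIdx N, ∑ j ∈ cellIdx N, ∑ k ∈ cellIdx N,
          (u i (clampIdx N (j + 1)) k + u i (clampIdx N (j - 1)) k
            - 2 * u i (clampIdx N j) k) * v i j k)
        = ∑ i ∈ faceIdx N, ∑ k ∈ cellIdx N, ∑ j ∈ cellIdx N,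
          (u i (clampIdx N (j + 1)) k + u i (clampIdx N (j - 1)) k
            - 2 * u i (clampIdx N j) k) * v i j k from
        Finset.sum_congr rfl fun i _ => Finset.sum_comm]
      rw [show (∑ i ∈ faceIdx N, ∑ j ∈ faceIdx N, ∑ k ∈ cellIdx N,
          (u i (j + 1) k - u i j k) * (v i (j + 1) k - v i j k))
        = ∑ i ∈ faceIdx N, ∑ k ∈ cellIdx N, ∑ j ∈ faceIdx N,
          (u i (j + 1) k - u i j k) * (v i (j + 1) k - v i j k) from
        Finset.sum_congr rfl fun i _ => Finset.sum_comm]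
      rw [← Finset.sum_neg_distrib]
      apply Finset.sum_congr rfl; intro i hi
      rw [← Finset.sum_neg_distrib]
      apply Finset.sum_congr rfl; intro k hk
      exact sbp_neumann N hN (fun j => u i j k) (fun j => v i j k)
    have h3 : (∑ i ∈ faceIdx N, ∑ j ∈ cellIdx N, ∑ k ∈ cellIdx N,
          (u i j (clampIdx N (k + 1)) + u i j (clampIdx N (k - 1))
            - 2 * u i j (clampIdx N k)) * v i j k)
        = -(∑ i ∈ faceIdx N, ∑ j ∈ cellIdx N, ∑ k ∈ faceIdx N,
            (u i j (k + 1) - u i j k) * (v i j (k + 1) - v i j k)) := by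
      rw [← Finset.sum_neg_distrib]
      apply Finset.sum_congr rfl; intro i hi
      rw [← Finset.sum_neg_distrib]
      apply Finset.sum_congr rfl; intro j hj
      exact sbp_neumann N hN (fun k => u i j k) (fun k => v i j k)
    rw [h1, h2, h3]
    unfold bilinX
    ring
  rw [main]
  field_simp
def swap12 (f : ℤ → ℤ → ℤ → ℝ) : ℤ → ℤ → ℤ → ℝ := fun i j k => f j i k
def swap13 (f : ℤ → ℤ → ℤ → ℝ) : ℤ → ℤ → ℤ → ℝ := fun i j k => f k j i

lemma ipFY_eq (N : ℕ) (h : ℝ) (f g : ℤ → ℤ → ℤ → ℝ) :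
    ipFY N h f g = ipFX N h (swap12 f) (swap12 g) := by
  unfold ipFY ipFX swap12
  congr 1
  exact Finset.sum_comm

lemma ipFZ_eq (N : ℕ) (h : ℝ) (f g : ℤ → ℤ → ℤ → ℝ) :
    ipFZ N h f g = ipFX N h (swap13 f) (swap13 g) := by
  unfold ipFZ ipFX swap13
  congr 1
  exact sum_swap13 _ _ _ _

lemma lapFY_swap (N : ℕ) (h : ℝ) (f : ℤ → ℤ → ℤ → ℝ) :
    (fun a b c => -lapFY N h f a b c)
      = swap12 (fun a b c => -lapFX N h (swap12 f) a b c) := by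
  funext a b c
  simp only [swap12, lapFY, lapFX, fExtY, fExtX]; ring

lemma lapFZ_swap (N : ℕ) (h : ℝ) (f : ℤ → ℤ → ℤ → ℝ) :
    (fun a b c => -lapFZ N h f a b c)
      = swap13 (fun a b c => -lapFX N h (swap13 f) a b c) := by
  funext a b c
  simp only [swap13, lapFZ, lapFX, fExtZ, fExtX]; ring

lemma swap12_neg_lap (N : ℕ) (h : ℝ) (f : ℤ → ℤ → ℤ → ℝ) :
    swap12 (fun a b c => -lapFY N h f a b c)
      = fun a b c => -lapFX N h (swap12 f) a b c := by
  funext a b c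
  simp only [swap12, lapFY, lapFX, fExtY, fExtX]; ring

lemma swap13_neg_lap (N : ℕ) (h : ℝ) (f : ℤ → ℤ → ℤ → ℝ) :
    swap13 (fun a b c => -lapFZ N h f a b c)
      = fun a b c => -lapFX N h (swap13 f) a b c := by
  funext a b c
  simp only [swap13, lapFZ, lapFX, fExtZ, fExtX]; ring

/-- symmetry and negative semidefiniteness of the
face-centered MAC Laplacian: for MAC fields `u, v` satisfying the
no-penetration and free-slip boundary conditions,
`(-Δ_h u, v) = (u, -Δ_h v)` and `(-Δ_h u, u) ≥ 0`. -/
theorem mac_laplacian_symmetric_nonneg (L : ℝ) (hL : 0 < L) (N : ℕ) (hN : 0 < N)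
    (ux uy uz vx vy vz : ℤ → ℤ → ℤ → ℝ)
    (hu : NoPen N ux uy uz) (hv : NoPen N vx vy vz) :
    macIP N (L / N) (fun a b c => -lapFX N (L / N) ux a b c)
        (fun a b c => -lapFY N (L / N) uy a b c)
        (fun a b c => -lapFZ N (L / N) uz a b c) vx vy vz =
      macIP N (L / N) ux uy uz (fun a b c => -lapFX N (L / N) vx a b c)
        (fun a b c => -lapFY N (L / N) vy a b c)
        (fun a b c => -lapFZ N (L / N) vz a b c) ∧
    0 ≤ macIP N (L / N) (fun a b c => -lapFX N (L / N) ux a b c)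
        (fun a b c => -lapFY N (L / N) uy a b c)
        (fun a b c => -lapFZ N (L / N) uz a b c) ux uy uz := by
  set h := L / N with hdef
  have hhpos : 0 < h := div_pos hL (by exact_mod_cast hN)
  have hh : h ≠ 0 := ne_of_gt hhpos
  -- no-penetration repackaged for the swapped fields
  have huy : ∀ j ∈ cellIdx N, ∀ k ∈ cellIdx N,
      swap12 uy 0 j k = 0 ∧ swap12 uy (N : ℤ) j k = 0 :=
    fun j hj k hk => ⟨(hu.2.1 j hj k hk).1, (hu.2.1 j hj k hk).2⟩
  have hvy : ∀ j ∈ cellIdx N, ∀ k ∈ cellIdx N,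
      swap12 vy 0 j k = 0 ∧ swap12 vy (N : ℤ) j k = 0 :=
    fun j hj k hk => ⟨(hv.2.1 j hj k hk).1, (hv.2.1 j hj k hk).2⟩
  have huz : ∀ j ∈ cellIdx N, ∀ k ∈ cellIdx N,
      swap13 uz 0 j k = 0 ∧ swap13 uz (N : ℤ) j k = 0 :=
    fun j hj k hk => ⟨(hu.2.2 k hk j hj).1, (hu.2.2 k hk j hj).2⟩
  have hvz : ∀ j ∈ cellIdx N, ∀ k ∈ cellIdx N,
      swap13 vz 0 j k = 0 ∧ swap13 vz (N : ℤ) j k = 0 :=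
    fun j hj k hk => ⟨(hv.2.2 k hk j hj).1, (hv.2.2 k hk j hj).2⟩
  -- the six reductions to the bilinear form
  have Ex1 : ipFX N h (fun a b c => -lapFX N h ux a b c) vx = h * bilinX N ux vx :=
    compX N hN h hh ux vx hu.1 hv.1
  have Ex2 : ipFX N h ux (fun a b c => -lapFX N h vx a b c) = h * bilinX N ux vx := by
    rw [ipFX_comm, compX N hN h hh vx ux hv.1 hu.1, bilinX_comm]
  have Ey1 : ipFY N h (fun a b c => -lapFY N h uy a b c) vy
      = h * bilinX N (swap12 uy) (swap12 vy) := by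
    rw [ipFY_eq, swap12_neg_lap]
    exact compX N hN h hh (swap12 uy) (swap12 vy) huy hvy
  have Ey2 : ipFY N h uy (fun a b c => -lapFY N h vy a b c)
      = h * bilinX N (swap12 uy) (swap12 vy) := by
    rw [ipFY_eq, swap12_neg_lap, ipFX_comm,
      compX N hN h hh (swap12 vy) (swap12 uy) hvy huy, bilinX_comm]
  have Ez1 : ipFZ N h (fun a b c => -lapFZ N h uz a b c) vz
      = h * bilinX N (swap13 uz) (swap13 vz) := by
    rw [ipFZ_eq, swap13_neg_lap]
    exact compX N hN h hh (swap13 uz) (swap13 vz) huz hvz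
  have Ez2 : ipFZ N h uz (fun a b c => -lapFZ N h vz a b c)
      = h * bilinX N (swap13 uz) (swap13 vz) := by
    rw [ipFZ_eq, swap13_neg_lap, ipFX_comm,
      compX N hN h hh (swap13 vz) (swap13 uz) hvz huz, bilinX_comm]
  constructor
  · show macIP N h _ _ _ vx vy vz = macIP N h ux uy uz _ _ _
    unfold macIP
    rw [Ex1, Ex2, Ey1, Ey2, Ez1, Ez2]
  · show 0 ≤ macIP N h _ _ _ ux uy uz
    unfold macIP
    have Fx : ipFX N h (fun a b c => -lapFX N h ux a b c) ux = h * bilinX N ux ux :=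
      compX N hN h hh ux ux hu.1 hu.1
    have Fy : ipFY N h (fun a b c => -lapFY N h uy a b c) uy
        = h * bilinX N (swap12 uy) (swap12 uy) := by
      rw [ipFY_eq, swap12_neg_lap]
      exact compX N hN h hh (swap12 uy) (swap12 uy) huy huy
    have Fz : ipFZ N h (fun a b c => -lapFZ N h uz a b c) uz
        = h * bilinX N (swap13 uz) (swap13 uz) := by
      rw [ipFZ_eq, swap13_neg_lap]
      exact compX N hN h hh (swap13 uz) (swap13 uz) huz huz
    rw [Fx, Fy, Fz]
    have := hhpos.le
    have b1 := bilinX_nonneg N ux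
    have b2 := bilinX_nonneg N (swap12 uy)
    have b3 := bilinX_nonneg N (swap13 uz)
    positivity
end
end
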